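/- arXiv:math/0011063 — 3 statements merged into one kernel-verified Lean document; each statement's English description precedes it below -/
import Mathlib

section
/- Let (A,L_A) be a compact quantum metric space and let K₁ and K₂ be compact convex subsets of S(A), with associated quotient compact quantum metric spaces (B₁,L₁) and (B₂,L₂). Then dist_q(B₁,B₂) ≤ dist_H^{ρ_{L_A}}(K₁,K₂), the Hausdorff distance between K₁ and K₂ for the metric ρ_{L_A}. -/
open scoped ENNReal

/-- An order-unit space in the sense of Kadison: a partially ordered real vector
space with a positive order unit `e` satisfying the order-unit property and the
Archimedean property. -/
structure OrderUnitSpace : Type 1 where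
  carrier : Type
  [toAddCommGroup : AddCommGroup carrier]
  [toModule : Module ℝ carrier]
  [toPartialOrder : PartialOrder carrier]
  add_le_add_left' : ∀ a b : carrier, a ≤ b → ∀ c : carrier, c + a ≤ c + b
  smul_nonneg' : ∀ (r : ℝ) (a : carrier), 0 ≤ r → 0 ≤ a → 0 ≤ r • a
  e : carrier
  e_nonneg : 0 ≤ e
  orderUnit : ∀ a : carrier, ∃ r : ℝ, a ≤ r • e
  arch : ∀ a : carrier, (∀ r : ℝ, 0 < r → a ≤ r • e) → a ≤ 0

attribute [instance] OrderUnitSpace.toAddCommGroup OrderUnitSpace.toModule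
  OrderUnitSpace.toPartialOrder

/-- The topology generated by the open balls of a distance function. -/
def ballTopology {S : Type*} (ρ : S → S → ℝ≥0∞) : TopologicalSpace S :=
  TopologicalSpace.generateFrom
    {U : Set S | ∃ (μ : S) (ε : ℝ≥0∞), 0 < ε ∧ U = {ν | ρ μ ν < ε}}

/-- The quotient seminorm of `L` along the surjection `π`. -/
noncomputable def quotientSeminorm {α β : Type*} (π : α → β) (L : α → ℝ) (b : β) : ℝ :=
  sInf {r : ℝ | ∃ a, π a = b ∧ L a = r}

/-- `L` induces `LB` via `π`, i.e. `LB` is the quotient seminorm of `L` for `π`. -/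
def Induces {α β : Type*} (π : α → β) (L : α → ℝ) (LB : β → ℝ) : Prop :=
  ∀ b, LB b = quotientSeminorm π L b

/-- Hausdorff distance between two subsets with respect to a distance function. -/
noncomputable def hausdorffDistWith {S : Type*} (ρ : S → S → ℝ≥0∞) (T U : Set S) : ℝ≥0∞ :=
  max (⨆ t ∈ T, ⨅ u ∈ U, ρ t u) (⨆ u ∈ U, ⨅ t ∈ T, ρ t u)

namespace OrderUnitSpace

variable (A B : OrderUnitSpace)

theorem le_of_sub_nonneg'' {x y : A.carrier} (h : 0 ≤ y - x) : x ≤ y := by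
  have h2 := A.add_le_add_left' 0 (y - x) h x
  have h3 : x + (y - x) = y := by abel
  rw [add_zero, h3] at h2
  exact h2

theorem smul_e_mono {r s : ℝ} (h : r ≤ s) : r • A.e ≤ s • A.e := by
  apply A.le_of_sub_nonneg''
  have h3 : s • A.e - r • A.e = (s - r) • A.e := by rw [sub_smul]
  rw [h3]
  exact A.smul_nonneg' _ _ (by linarith) A.e_nonneg

/-- The order-unit norm. -/
noncomputable def onorm (a : A.carrier) : ℝ :=
  sInf {r : ℝ | -(r • A.e) ≤ a ∧ a ≤ r • A.e}

/-- A state: a unital positive linear functional. -/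
def IsState (μ : A.carrier →ₗ[ℝ] ℝ) : Prop :=
  μ A.e = 1 ∧ ∀ a : A.carrier, 0 ≤ a → 0 ≤ μ a

/-- The state space. -/
def State : Type := {μ : A.carrier →ₗ[ℝ] ℝ // A.IsState μ}

/-- The weak-* topology on the state space. -/
instance : TopologicalSpace A.State :=
  TopologicalSpace.induced (fun μ : A.State => (μ.1 : A.carrier → ℝ)) Pi.topologicalSpace

/-- The metric `ρ_L` on the state space defined by a seminorm `L`. -/
noncomputable def rho (L : Seminorm ℝ A.carrier) (μ ν : A.State) : ℝ≥0∞ :=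
  ⨆ a : {a : A.carrier // L a ≤ 1}, ENNReal.ofReal |μ.1 a.1 - ν.1 a.1|

/-- A Lipschitz seminorm: its null space is exactly `ℝ e`. -/
def IsLipschitz (L : Seminorm ℝ A.carrier) : Prop :=
  ∀ a : A.carrier, L a = 0 ↔ ∃ t : ℝ, a = t • A.e

/-- A Lip-norm: a Lipschitz seminorm whose metric `ρ_L` induces the weak-* topology. -/
def IsLipNorm (L : Seminorm ℝ A.carrier) : Prop :=
  A.IsLipschitz L ∧ ballTopology (A.rho L) = (inferInstance : TopologicalSpace A.State)

/-- The diameter of the state space for `ρ_L`. -/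
noncomputable def diam (L : Seminorm ℝ A.carrier) : ℝ≥0∞ :=
  ⨆ (μ : A.State) (ν : A.State), A.rho L μ ν

/-- The radius: half the diameter. -/
noncomputable def radius (L : Seminorm ℝ A.carrier) : ℝ≥0∞ := A.diam L / 2

/-- Morphism of order-unit spaces: a unital positive linear map. -/
def IsMorphism (f : A.carrier →ₗ[ℝ] B.carrier) : Prop :=
  f A.e = B.e ∧ ∀ a : A.carrier, 0 ≤ a → 0 ≤ f a

/-- Pull back a state along a morphism; this is `S(π)`. -/
noncomputable def pullState (f : A.carrier →ₗ[ℝ] B.carrier) (hf : A.IsMorphism B f)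
    (μ : B.State) : A.State :=
  ⟨(μ.1).comp f, by
    constructor
    · rw [LinearMap.comp_apply, hf.1]; exact μ.2.1
    · intro a ha; exact μ.2.2 _ (hf.2 a ha)⟩

/-- The direct sum `A ⊕ B` as an order-unit space. -/
@[reducible] def prod : OrderUnitSpace where
  carrier := A.carrier × B.carrier
  add_le_add_left' := by
    intro a b hab c
    rw [Prod.le_def] at hab ⊢
    exact ⟨A.add_le_add_left' _ _ hab.1 _, B.add_le_add_left' _ _ hab.2 _⟩
  smul_nonneg' := by
    intro r a hr ha
    rw [Prod.le_def] at ha ⊢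
    exact ⟨A.smul_nonneg' r a.1 hr ha.1, B.smul_nonneg' r a.2 hr ha.2⟩
  e := (A.e, B.e)
  e_nonneg := by
    rw [Prod.le_def]
    exact ⟨A.e_nonneg, B.e_nonneg⟩
  orderUnit := by
    intro a
    obtain ⟨r₁, h1⟩ := A.orderUnit a.1
    obtain ⟨r₂, h2⟩ := B.orderUnit a.2
    refine ⟨max r₁ r₂, ?_⟩
    rw [Prod.le_def]
    exact ⟨le_trans h1 (A.smul_e_mono (le_max_left _ _)),
      le_trans h2 (B.smul_e_mono (le_max_right _ _))⟩
  arch := by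
    intro a h
    rw [Prod.le_def]
    exact ⟨A.arch a.1 fun r hr => ((Prod.le_def.mp (h r hr)).1),
      B.arch a.2 fun r hr => ((Prod.le_def.mp (h r hr)).2)⟩

/-- The embedding of `S(A)` into `S(A ⊕ B)` dual to the first coordinate projection. -/
noncomputable def leftState (μ : A.State) : (A.prod B).State :=
  ⟨(μ.1).comp (LinearMap.fst ℝ A.carrier B.carrier), by
    constructor
    · exact μ.2.1
    · intro p hp; exact μ.2.2 p.1 hp.1⟩

/-- The embedding of `S(B)` into `S(A ⊕ B)` dual to the second coordinate projection. -/
noncomputable def rightState (ν : B.State) : (A.prod B).State :=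
  ⟨(ν.1).comp (LinearMap.snd ℝ A.carrier B.carrier), by
    constructor
    · exact ν.2.1
    · intro p hp; exact ν.2.2 p.2 hp.2⟩

/-- The set `M(L_A, L_B)` of Lip-norms on `A ⊕ B` inducing `L_A` and `L_B`
via the coordinate projections. -/
def admissible (LA : Seminorm ℝ A.carrier) (LB : Seminorm ℝ B.carrier) :
    Set (Seminorm ℝ (A.prod B).carrier) :=
  {L | (A.prod B).IsLipNorm L ∧
    Induces (Prod.fst : A.carrier × B.carrier → A.carrier) (fun p => L p) (fun a => LA a) ∧
    Induces (Prod.snd : A.carrier × B.carrier → B.carrier) (fun p => L p) (fun b => LB b)}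

/-- Quantum Gromov–Hausdorff distance. -/
noncomputable def distq (LA : Seminorm ℝ A.carrier) (LB : Seminorm ℝ B.carrier) : ℝ≥0∞ :=
  ⨅ L ∈ A.admissible B LA LB,
    hausdorffDistWith ((A.prod B).rho L) (Set.range (A.leftState B)) (Set.range (A.rightState B))

end OrderUnitSpace

/-- A set of states is convex if it is closed under convex combinations
(formed at the level of the underlying linear functionals). -/
def StateConvex (A : OrderUnitSpace) (K : Set A.State) : Prop :=
  ∀ μ ∈ K, ∀ ν ∈ K, ∀ t : ℝ, 0 ≤ t → t ≤ 1 → ∀ σ : A.State,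
    (σ.1 : A.carrier →ₗ[ℝ] ℝ) = t • μ.1 + (1 - t) • ν.1 → σ ∈ K


namespace OrderUnitSpace

variable (A : OrderUnitSpace)

theorem sub_nonneg_of_le' {x y : A.carrier} (h : x ≤ y) : 0 ≤ y - x := by
  have h2 := A.add_le_add_left' x y h (-x)
  have e1 : -x + x = 0 := by abel
  have e2 : -x + y = y - x := by abel
  rwa [e1, e2] at h2

theorem neg_le_of_neg_le' {x y : A.carrier} (h : -x ≤ y) : -y ≤ x := by
  have h2 := A.add_le_add_left' (-x) y h (x - y)
  have e1 : x - y + -x = -y := by abel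
  have e2 : x - y + y = x := by abel
  rwa [e1, e2] at h2

theorem exists_unit_bound (b : A.carrier) :
    ∃ M : ℝ, 0 ≤ M ∧ -(M • A.e) ≤ b ∧ b ≤ M • A.e := by
  obtain ⟨r₁, hr₁⟩ := A.orderUnit b
  obtain ⟨r₂, hr₂⟩ := A.orderUnit (-b)
  refine ⟨max (max r₁ r₂) 0, le_max_right _ _, ?_, ?_⟩
  · apply A.neg_le_of_neg_le'
    exact le_trans hr₂ (A.smul_e_mono (le_trans (le_max_right r₁ r₂) (le_max_left _ _)))
  · exact le_trans hr₁ (A.smul_e_mono (le_trans (le_max_left r₁ r₂) (le_max_left _ _)))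

/-- Predicate describing functions that come from states. -/
def IsStateFun (φ : A.carrier → ℝ) : Prop :=
  (∀ x y, φ (x + y) = φ x + φ y) ∧ (∀ (r : ℝ) (x), φ (r • x) = r * φ x) ∧
    φ A.e = 1 ∧ ∀ a, 0 ≤ a → 0 ≤ φ a

theorem isStateFun_coe (μ : A.State) : A.IsStateFun ⇑μ.1 :=
  ⟨fun x y => map_add μ.1 x y, fun r x => by rw [map_smul]; rfl, μ.2.1, fun a ha => μ.2.2 a ha⟩

theorem IsStateFun.mono {φ : A.carrier → ℝ} (hφ : A.IsStateFun φ) {x y : A.carrier}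
    (h : x ≤ y) : φ x ≤ φ y := by
  have h1 : φ (x + (y - x)) = φ x + φ (y - x) := hφ.1 x (y - x)
  have h2 : x + (y - x) = y := by abel
  rw [h2] at h1
  have h3 := hφ.2.2.2 _ (A.sub_nonneg_of_le' h)
  linarith

theorem IsStateFun.abs_le {φ : A.carrier → ℝ} (hφ : A.IsStateFun φ) {b : A.carrier} {M : ℝ}
    (h1 : -(M • A.e) ≤ b) (h2 : b ≤ M • A.e) : |φ b| ≤ M := by
  have hsm : ∀ r : ℝ, φ (r • A.e) = r := fun r => by rw [hφ.2.1 r A.e, hφ.2.2.1, mul_one]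
  have hu := hφ.mono A h2
  have hl := hφ.mono A h1
  rw [hsm] at hu
  have hneg : φ (-(M • A.e)) = -M := by
    have h0 : φ 0 = 0 := by
      have := hφ.1 0 0
      rw [add_zero] at this; linarith
    have := hφ.1 (M • A.e) (-(M • A.e))
    rw [add_neg_cancel, h0, hsm] at this
    linarith
  rw [hneg] at hl
  exact _root_.abs_le.2 ⟨hl, hu⟩

theorem state_abs_le (μ : A.State) {b : A.carrier} {M : ℝ}
    (h1 : -(M • A.e) ≤ b) (h2 : b ≤ M • A.e) : |μ.1 b| ≤ M :=
  IsStateFun.abs_le A (A.isStateFun_coe μ) h1 h2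

theorem exists_state_bound (b : A.carrier) :
    ∃ M : ℝ, 0 ≤ M ∧ ∀ μ : A.State, |μ.1 b| ≤ M := by
  obtain ⟨M, hM0, h1, h2⟩ := A.exists_unit_bound b
  exact ⟨M, hM0, fun μ => A.state_abs_le μ h1 h2⟩

theorem state_mono (μ : A.State) {x y : A.carrier} (h : x ≤ y) : μ.1 x ≤ μ.1 y :=
  (A.isStateFun_coe μ).mono A h

theorem state_smul_e (μ : A.State) (r : ℝ) : μ.1 (r • A.e) = r := by
  rw [map_smul, μ.2.1]; simp

theorem eval_continuous (x : A.carrier) : Continuous fun μ : A.State => μ.1 x :=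
  (continuous_apply x).comp continuous_induced_dom

theorem isOpen_evalBall (z : A.carrier) (r κ : ℝ) :
    IsOpen {μ : A.State | |μ.1 z - r| < κ} := by
  have h : {μ : A.State | |μ.1 z - r| < κ} = (fun μ : A.State => μ.1 z) ⁻¹' Metric.ball r κ := by
    ext μ; simp [Metric.mem_ball, Real.dist_eq]
  rw [h]
  exact Metric.isOpen_ball.preimage (A.eval_continuous z)

end OrderUnitSpace
namespace OrderUnitSpace

variable (A : OrderUnitSpace)

theorem rho_self (L : Seminorm ℝ A.carrier) (μ : A.State) : A.rho L μ μ = 0 := by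
  simp [OrderUnitSpace.rho]

theorem rho_comm (L : Seminorm ℝ A.carrier) (μ ν : A.State) :
    A.rho L μ ν = A.rho L ν μ := by
  unfold OrderUnitSpace.rho
  congr 1; funext a; rw [abs_sub_comm]

theorem ofReal_abs_le_rho (L : Seminorm ℝ A.carrier) (μ ν : A.State) {a : A.carrier}
    (ha : L a ≤ 1) : ENNReal.ofReal |μ.1 a - ν.1 a| ≤ A.rho L μ ν :=
  le_iSup (fun x : {a : A.carrier // L a ≤ 1} => ENNReal.ofReal |μ.1 x.1 - ν.1 x.1|) ⟨a, ha⟩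

theorem rho_triangle (L : Seminorm ℝ A.carrier) (μ ν σ : A.State) :
    A.rho L μ σ ≤ A.rho L μ ν + A.rho L ν σ := by
  refine iSup_le fun x => ?_
  calc ENNReal.ofReal |μ.1 x.1 - σ.1 x.1|
      ≤ ENNReal.ofReal (|μ.1 x.1 - ν.1 x.1| + |ν.1 x.1 - σ.1 x.1|) :=
        ENNReal.ofReal_le_ofReal (abs_sub_le _ _ _)
    _ = ENNReal.ofReal |μ.1 x.1 - ν.1 x.1| + ENNReal.ofReal |ν.1 x.1 - σ.1 x.1| :=
        ENNReal.ofReal_add (abs_nonneg _) (abs_nonneg _)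
    _ ≤ A.rho L μ ν + A.rho L ν σ :=
        add_le_add (A.ofReal_abs_le_rho L μ ν x.2) (A.ofReal_abs_le_rho L ν σ x.2)

theorem abs_le_of_rho_le {L : Seminorm ℝ A.carrier} (hLip : A.IsLipschitz L)
    {μ ν : A.State} {d : ℝ} (hd : 0 ≤ d) (h : A.rho L μ ν ≤ ENNReal.ofReal d)
    (a : A.carrier) : |μ.1 a - ν.1 a| ≤ d * L a := by
  rcases eq_or_lt_of_le (apply_nonneg L a) with h0 | h0
  · obtain ⟨t, rfl⟩ := (hLip a).1 h0.symm
    rw [A.state_smul_e μ t, A.state_smul_e ν t, sub_self, abs_zero]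
    positivity
  · set x := (L a)⁻¹ • a with hx
    have hLx : L x ≤ 1 := by
      rw [hx, map_smul_eq_mul, Real.norm_eq_abs, abs_inv, abs_of_pos h0, inv_mul_cancel₀ h0.ne']
    have h1 := le_trans (A.ofReal_abs_le_rho L μ ν hLx) h
    have h2 : |μ.1 x - ν.1 x| ≤ d := by
      rw [← ENNReal.ofReal_le_ofReal_iff hd]
      exact h1
    have h3 : μ.1 x - ν.1 x = (L a)⁻¹ * (μ.1 a - ν.1 a) := by
      rw [hx, map_smul, map_smul]
      simp [smul_eq_mul]; ring
    rw [h3, abs_mul, abs_inv, abs_of_pos h0] at h2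
    calc |μ.1 a - ν.1 a| = L a * ((L a)⁻¹ * |μ.1 a - ν.1 a|) := by
          field_simp
      _ ≤ L a * d := by
          exact mul_le_mul_of_nonneg_left h2 (le_of_lt h0)
      _ = d * L a := mul_comm _ _

theorem abs_le_of_rho_le_one {L : Seminorm ℝ A.carrier} (hLip : A.IsLipschitz L)
    {μ ν : A.State} {d : ℝ} (hd : 0 ≤ d) (h : A.rho L μ ν ≤ ENNReal.ofReal d)
    {a : A.carrier} (ha : L a ≤ 1) : |μ.1 a - ν.1 a| ≤ d :=
  le_trans (A.abs_le_of_rho_le hLip hd h a) (by nlinarith [apply_nonneg L a])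

end OrderUnitSpace
namespace OrderUnitSpace

variable (A : OrderUnitSpace)

theorem isEmbedding_coeState :
    Topology.IsEmbedding (fun μ : A.State => (⇑μ.1 : A.carrier → ℝ)) := by
  refine ⟨⟨rfl⟩, ?_⟩
  intro μ ν h
  exact Subtype.ext (LinearMap.ext fun x => congrFun h x)

theorem range_coeState :
    Set.range (fun μ : A.State => (⇑μ.1 : A.carrier → ℝ)) = {φ | A.IsStateFun φ} := by
  ext φ
  constructor
  · rintro ⟨μ, rfl⟩; exact A.isStateFun_coe μ
  · intro hφ
    refine ⟨⟨⟨⟨φ, hφ.1⟩, ?_⟩, hφ.2.2.1, fun a ha => hφ.2.2.2 a ha⟩, rfl⟩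
    intro r x
    exact hφ.2.1 r x

set_option maxHeartbeats 1000000 in
theorem isClosed_stateFun : IsClosed {φ : A.carrier → ℝ | A.IsStateFun φ} := by
  have h : {φ : A.carrier → ℝ | A.IsStateFun φ} =
      (⋂ (x) (y), {φ : A.carrier → ℝ | φ (x + y) = φ x + φ y}) ∩
      ((⋂ (r : ℝ) (x), {φ : A.carrier → ℝ | φ (r • x) = r * φ x}) ∩
       ({φ : A.carrier → ℝ | φ A.e = 1} ∩
        ⋂ (a) (_ : 0 ≤ a), {φ : A.carrier → ℝ | 0 ≤ φ a})) := by
    ext φ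
    simp only [IsStateFun, Set.mem_inter_iff, Set.mem_iInter, Set.mem_setOf_eq]
    try tauto
  rw [h]
  have c1 : IsClosed (⋂ (x) (y), {φ : A.carrier → ℝ | φ (x + y) = φ x + φ y}) :=
    isClosed_iInter fun x => isClosed_iInter fun y =>
      isClosed_eq (continuous_apply (x+y)) ((continuous_apply x).add (continuous_apply y))
  have c2 : IsClosed (⋂ (r : ℝ) (x), {φ : A.carrier → ℝ | φ (r • x) = r * φ x}) :=
    isClosed_iInter fun r => isClosed_iInter fun x =>
      isClosed_eq (continuous_apply (r • x)) (continuous_const.mul (continuous_apply x))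
  have c3 : IsClosed {φ : A.carrier → ℝ | φ A.e = 1} :=
    isClosed_eq (continuous_apply _) continuous_const
  have c4 : IsClosed (⋂ (a) (_ : (0:A.carrier) ≤ a), {φ : A.carrier → ℝ | 0 ≤ φ a}) :=
    isClosed_iInter fun a => isClosed_iInter fun _ =>
      isClosed_le continuous_const (continuous_apply _)
  exact c1.inter (c2.inter (c3.inter c4))

set_option maxHeartbeats 1000000 in
theorem isCompact_univ_state : IsCompact (Set.univ : Set A.State) := by
  rw [(A.isEmbedding_coeState).isCompact_iff, Set.image_univ, A.range_coeState]
  have hM : ∀ b : A.carrier, ∃ M : ℝ, 0 ≤ M ∧ -(M • A.e) ≤ b ∧ b ≤ M • A.e :=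
    A.exists_unit_bound
  choose M hM0 hM1 hM2 using hM
  refine IsCompact.of_isClosed_subset (isCompact_univ_pi fun b => isCompact_Icc
    (a := -(M b)) (b := M b)) (A.isClosed_stateFun) ?_
  intro φ hφ
  intro b _
  have := IsStateFun.abs_le A hφ (hM1 b) (hM2 b)
  rw [Set.mem_Icc]
  constructor <;> [linarith [abs_le.1 this]; linarith [abs_le.1 this]]

noncomputable def segmentState (μ ν : A.State) (t : ℝ) (h0 : 0 ≤ t) (h1 : t ≤ 1) : A.State :=
  ⟨t • μ.1 + (1 - t) • ν.1, by
    constructor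
    · simp [LinearMap.add_apply, LinearMap.smul_apply, μ.2.1, ν.2.1]
    · intro a ha
      have h2 := μ.2.2 a ha
      have h3 := ν.2.2 a ha
      simp only [LinearMap.add_apply, LinearMap.smul_apply, smul_eq_mul]
      nlinarith⟩

theorem isPreconnected_univ_state : IsPreconnected (Set.univ : Set A.State) := by
  rcases isEmpty_or_nonempty A.State with hE | hNE
  · rw [Set.univ_eq_empty_iff.2 hE]; exact isPreconnected_empty
  · obtain ⟨μ₀⟩ := hNE
    have hpath : IsPathConnected (Set.univ : Set A.State) := by
      refine ⟨μ₀, Set.mem_univ _, ?_⟩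
      intro ν _
      refine ⟨⟨⟨fun s => A.segmentState ν μ₀ s s.2.1 s.2.2, ?_⟩, ?_, ?_⟩, fun _ => Set.mem_univ _⟩
      · apply continuous_induced_rng.2
        simp only [Function.comp_def]
        apply continuous_pi
        intro x
        have hfe : (fun s : unitInterval => ((A.segmentState ν μ₀ s s.2.1 s.2.2).1 : A.carrier → ℝ) x)
            = fun s : unitInterval => (s : ℝ) * ν.1 x + (1 - (s : ℝ)) * μ₀.1 x := by
          funext s
          simp [OrderUnitSpace.segmentState, smul_eq_mul]
        rw [hfe]
        fun_prop
      · apply Subtype.ext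
        apply LinearMap.ext
        intro x
        simp [OrderUnitSpace.segmentState]
      · apply Subtype.ext
        apply LinearMap.ext
        intro x
        simp [OrderUnitSpace.segmentState]
    exact hpath.isConnected.isPreconnected

end OrderUnitSpace
theorem finset_exists_pos_le {α : Type*} (I : Finset α) (r : α → ℝ)
    (h : ∀ a ∈ I, 0 < r a) : ∃ η : ℝ, 0 < η ∧ ∀ a ∈ I, η ≤ r a := by
  classical
  induction I using Finset.induction_on with
  | empty => exact ⟨1, one_pos, by simp⟩
  | @insert a s ha ih =>
    obtain ⟨η, hη, hle⟩ := ih (fun b hb => h b (Finset.mem_insert_of_mem hb))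
    refine ⟨min η (r a), lt_min hη (h a (Finset.mem_insert_self a s)), ?_⟩
    intro b hb
    rcases Finset.mem_insert.1 hb with rfl | hb
    · exact min_le_right _ _
    · exact le_trans (min_le_left _ _) (hle b hb)

namespace OrderUnitSpace

variable (A : OrderUnitSpace)

theorem isOpen_rho_ball {L : Seminorm ℝ A.carrier} (h : A.IsLipNorm L) (μ : A.State)
    {ε : ℝ≥0∞} (hε : 0 < ε) : IsOpen {ν : A.State | A.rho L μ ν < ε} := by
  have hb : @IsOpen A.State (ballTopology (A.rho L)) {ν : A.State | A.rho L μ ν < ε} :=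
    TopologicalSpace.isOpen_generateFrom_of_mem ⟨μ, ε, hε, rfl⟩
  rwa [h.2] at hb

theorem mem_rho_ball_self {L : Seminorm ℝ A.carrier} (μ : A.State) {ε : ℝ≥0∞} (hε : 0 < ε) :
    μ ∈ {ν : A.State | A.rho L μ ν < ε} := by
  simp only [Set.mem_setOf_eq, A.rho_self L μ]
  exact hε

theorem rho_lt_top {L : Seminorm ℝ A.carrier} (h : A.IsLipNorm L) (μ ν : A.State) :
    A.rho L μ ν < ⊤ := by
  set S := {ν : A.State | A.rho L μ ν < ⊤} with hS
  have hopen : IsOpen S := A.isOpen_rho_ball h μ (by norm_num)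
  have hcopen : IsOpen Sᶜ := by
    rw [isOpen_iff_forall_mem_open]
    intro σ hσ
    refine ⟨{ν : A.State | A.rho L σ ν < 1}, ?_, A.isOpen_rho_ball h σ one_pos,
      A.mem_rho_ball_self σ one_pos⟩
    intro ν hν hνS
    apply hσ
    show A.rho L μ σ < ⊤
    have h1 : A.rho L μ σ ≤ A.rho L μ ν + A.rho L ν σ := A.rho_triangle L μ ν σ
    have h2 : A.rho L ν σ < ⊤ := by
      rw [A.rho_comm]
      exact lt_trans hν (by norm_num)
    exact lt_of_le_of_lt h1 (ENNReal.add_lt_top.2 ⟨hνS, h2⟩)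
  by_contra hc
  have hν : ν ∈ Sᶜ := by simpa [S] using hc
  have hpre := A.isPreconnected_univ_state
  have hcov : (Set.univ : Set A.State) ⊆ S ∪ Sᶜ := by
    intro x _; exact (em (x ∈ S)).imp id id
  have h1 : (Set.univ ∩ S).Nonempty := ⟨μ, Set.mem_univ _, A.mem_rho_ball_self μ (by norm_num)⟩
  have h2 : (Set.univ ∩ Sᶜ).Nonempty := ⟨ν, Set.mem_univ _, hν⟩
  obtain ⟨x, _, hxS, hxSc⟩ := hpre S Sᶜ hopen hcopen hcov h1 h2
  exact hxSc hxS


end OrderUnitSpace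
namespace OrderUnitSpace
variable (A : OrderUnitSpace)
set_option maxHeartbeats 1000000 in
theorem exists_rho_bound {L : Seminorm ℝ A.carrier} (h : A.IsLipNorm L) :
    ∃ D : ℝ, 0 ≤ D ∧ ∀ μ ν : A.State, A.rho L μ ν ≤ ENNReal.ofReal D := by
  rcases isEmpty_or_nonempty A.State with hE | hNE
  · exact ⟨0, le_rfl, fun μ => hE.elim μ⟩
  obtain ⟨s, hs⟩ := (A.isCompact_univ_state).elim_finite_subcover
    (fun ν : A.State => {ν' : A.State | A.rho L ν ν' < 1})
    (fun ν => A.isOpen_rho_ball h ν one_pos)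
    (fun ν _ => Set.mem_iUnion.2 ⟨ν, A.mem_rho_ball_self ν one_pos⟩)
  classical
  set E : ℝ≥0∞ := (s ×ˢ s).sup (fun p : A.State × A.State => A.rho L p.1 p.2) with hEdef
  have hEtop : E ≠ ⊤ := by
    refine ne_top_of_lt (?_ : E < ⊤)
    refine Finset.sup_lt_iff (by norm_num) |>.2 fun p _ => A.rho_lt_top h p.1 p.2
  refine ⟨(E + 2).toReal, ENNReal.toReal_nonneg, fun μ ν => ?_⟩
  have hmem : ∀ x : A.State, ∃ i ∈ s, A.rho L i x < 1 := by
    intro x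
    have hx := hs (Set.mem_univ x)
    simpa using hx
  obtain ⟨i, hi, hiμ⟩ := hmem μ
  obtain ⟨j, hj, hjν⟩ := hmem ν
  have hij : A.rho L i j ≤ E := by
    have hle := Finset.le_sup (f := fun p : A.State × A.State => A.rho L p.1 p.2)
      (b := (i, j)) (Finset.mem_product.2 ⟨hi, hj⟩)
    exact hle
  have htri : A.rho L μ ν ≤ A.rho L μ i + A.rho L i j + A.rho L j ν := by
    calc A.rho L μ ν ≤ A.rho L μ i + A.rho L i ν := A.rho_triangle L μ i ν
      _ ≤ A.rho L μ i + (A.rho L i j + A.rho L j ν) :=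
          add_le_add_right (A.rho_triangle L i j ν) _
      _ = A.rho L μ i + A.rho L i j + A.rho L j ν := by ring
  have hμi : A.rho L μ i ≤ 1 := by rw [A.rho_comm]; exact hiμ.le
  have hbound : A.rho L μ ν ≤ 1 + E + 1 :=
    le_trans htri (add_le_add (add_le_add hμi hij) hjν.le)
  have heq : (1 : ℝ≥0∞) + E + 1 = E + 2 := by ring
  rw [heq] at hbound
  rwa [ENNReal.ofReal_toReal (by simp [hEtop])]

set_option maxHeartbeats 1000000 in
theorem exists_finset_control {L : Seminorm ℝ A.carrier} (h : A.IsLipNorm L) (f : A.State)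
    {ε : ℝ} (hε : 0 < ε) :
    ∃ (I : Finset A.carrier) (η : ℝ), 0 < η ∧ ∀ f' : A.State,
      (∀ b ∈ I, |f'.1 b - f.1 b| < η) → A.rho L f f' ≤ ENNReal.ofReal ε := by
  have hball : IsOpen {f' : A.State | A.rho L f f' < ENNReal.ofReal ε} :=
    A.isOpen_rho_ball h f (ENNReal.ofReal_pos.2 hε)
  rw [isOpen_induced_iff] at hball
  obtain ⟨V, hV, hVpre⟩ := hball
  have hfV : (⇑f.1 : A.carrier → ℝ) ∈ V := by
    have hf : f ∈ {f' : A.State | A.rho L f f' < ENNReal.ofReal ε} :=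
      A.mem_rho_ball_self f (ENNReal.ofReal_pos.2 hε)
    rw [← hVpre] at hf
    exact hf
  obtain ⟨I, u, hIu, hsub⟩ := (isOpen_pi_iff.1 hV) _ hfV
  have hrad : ∀ b ∈ I, ∃ r : ℝ, 0 < r ∧ Metric.ball (f.1 b) r ⊆ u b := by
    intro b hb
    obtain ⟨r, hr, hrsub⟩ := Metric.isOpen_iff.1 (hIu b hb).1 _ (hIu b hb).2
    exact ⟨r, hr, hrsub⟩
  classical
  choose! r hr hrsub using hrad
  obtain ⟨η, hη, hηle⟩ := finset_exists_pos_le I r hr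
  refine ⟨I, η, hη, fun f' hf' => ?_⟩
  have hmem : (⇑f'.1 : A.carrier → ℝ) ∈ (↑I : Set A.carrier).pi u := by
    intro b hb
    apply hrsub b hb
    rw [Metric.mem_ball, Real.dist_eq]
    exact lt_of_lt_of_le (hf' b hb) (hηle b hb)
  have hf' : f' ∈ {f' : A.State | A.rho L f f' < ENNReal.ofReal ε} := by
    rw [← hVpre]
    exact hsub hmem
  exact hf'.le

end OrderUnitSpace
theorem isOpen_ballTopology_of {S : Type*} (ρ : S → S → ℝ≥0∞) (U : Set S)
    (h : ∀ x ∈ U, ∃ V : Set S, (∃ (μ : S) (ε : ℝ≥0∞), 0 < ε ∧ V = {ν | ρ μ ν < ε}) ∧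
      x ∈ V ∧ V ⊆ U) :
    @IsOpen S (ballTopology ρ) U := by
  have hU : U = ⋃₀ {V : Set S | (∃ (μ : S) (ε : ℝ≥0∞), 0 < ε ∧ V = {ν | ρ μ ν < ε}) ∧ V ⊆ U} := by
    ext x
    constructor
    · intro hx
      obtain ⟨V, hV1, hxV, hVU⟩ := h x hx
      exact ⟨V, ⟨hV1, hVU⟩, hxV⟩
    · rintro ⟨V, ⟨_, hVU⟩, hxV⟩
      exact hVU hxV
  rw [hU]
  apply TopologicalSpace.GenerateOpen.sUnion
  rintro V ⟨⟨μ, ε, hε, rfl⟩, -⟩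
  exact TopologicalSpace.GenerateOpen.basic _ ⟨μ, ε, hε, rfl⟩

namespace OrderUnitSpace

variable (A : OrderUnitSpace)

set_option maxHeartbeats 1000000 in
theorem ballTopology_le_weak {L : Seminorm ℝ A.carrier} (hLip : A.IsLipschitz L) :
    ballTopology (A.rho L) ≤ (inferInstance : TopologicalSpace A.State) := by
  have hcont : ∀ x : A.carrier, @Continuous A.State ℝ (ballTopology (A.rho L)) _
      (fun μ => μ.1 x) := by
    intro x
    by_cases hx : L x = 0
    · obtain ⟨t, hxe⟩ := (hLip x).1 hx
      have hfe : (fun μ : A.State => μ.1 x) = fun _ => t :=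
        funext fun μ => by rw [hxe]; exact A.state_smul_e μ t
      rw [hfe]
      exact @continuous_const _ _ (ballTopology (A.rho L)) _ t
    · have hpos : 0 < L x := lt_of_le_of_ne (apply_nonneg L x) (Ne.symm hx)
      rw [@continuous_def _ _ (ballTopology (A.rho L)) _]
      intro s hs
      apply isOpen_ballTopology_of
      intro μ₀ hμ₀
      obtain ⟨ε, hε, hballs⟩ := Metric.isOpen_iff.1 hs _ hμ₀
      have hd : (0:ℝ) < ε / (2 * L x) := by positivity
      refine ⟨{ν : A.State | A.rho L μ₀ ν < ENNReal.ofReal (ε / (2 * L x))},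
        ⟨μ₀, ENNReal.ofReal (ε / (2 * L x)), ENNReal.ofReal_pos.2 hd, rfl⟩,
        A.mem_rho_ball_self μ₀ (ENNReal.ofReal_pos.2 hd), ?_⟩
      intro ν hν
      apply hballs
      have h1 : |μ₀.1 x - ν.1 x| ≤ (ε / (2 * L x)) * L x :=
        A.abs_le_of_rho_le hLip hd.le (le_of_lt hν) x
      have h2 : (ε / (2 * L x)) * L x = ε / 2 := by field_simp
      rw [h2] at h1
      rw [Set.mem_preimage] at *
      rw [Metric.mem_ball, Real.dist_eq, abs_sub_comm]
      linarith
  have hc : @Continuous _ _ (ballTopology (A.rho L)) _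
      (fun μ : A.State => (⇑μ.1 : A.carrier → ℝ)) := by
    exact @continuous_pi _ _ _ (ballTopology (A.rho L)) _ _ hcont
  exact continuous_iff_le_induced.1 hc

theorem weak_le_ballTopology {L : Seminorm ℝ A.carrier}
    (key : ∀ (σ : A.State) (ε : ℝ), 0 < ε → ∃ U : Set A.State, IsOpen U ∧ σ ∈ U ∧
      ∀ σ' ∈ U, A.rho L σ σ' ≤ ENNReal.ofReal ε) :
    (inferInstance : TopologicalSpace A.State) ≤ ballTopology (A.rho L) := by
  apply le_generateFrom
  rintro s ⟨μ, ε, hε, rfl⟩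
  rw [isOpen_iff_forall_mem_open]
  intro σ hσ
  have hd : A.rho L μ σ < ε := hσ
  obtain ⟨c, hdc, hcε⟩ := exists_between hd
  have hcne : c ≠ ⊤ := (lt_of_lt_of_le hcε le_top).ne
  have hsub : c - A.rho L μ σ ≠ ⊤ := ENNReal.sub_ne_top hcne
  set ε₀ := (c - A.rho L μ σ).toReal with hε₀def
  have hε₀pos : 0 < ε₀ := ENNReal.toReal_pos (tsub_pos_of_lt hdc).ne' hsub
  obtain ⟨U, hUopen, hUσ, hUbound⟩ := key σ ε₀ hε₀pos
  refine ⟨U, ?_, hUopen, hUσ⟩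
  intro σ' hσ'
  show A.rho L μ σ' < ε
  have h3 : ENNReal.ofReal ε₀ = c - A.rho L μ σ := ENNReal.ofReal_toReal hsub
  calc A.rho L μ σ' ≤ A.rho L μ σ + A.rho L σ σ' := A.rho_triangle L μ σ σ'
    _ ≤ A.rho L μ σ + ENNReal.ofReal ε₀ := add_le_add_right (hUbound σ' hσ') _
    _ = A.rho L μ σ + (c - A.rho L μ σ) := by rw [h3]
    _ = c := add_tsub_cancel_of_le hdc.le
    _ < ε := hcε

theorem all_zero_of_isEmpty_state (hE : IsEmpty A.State) : ∀ b : A.carrier, b = 0 := by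
  by_cases he : A.e = 0
  · intro b
    obtain ⟨r, hr⟩ := A.orderUnit b
    obtain ⟨r', hr'⟩ := A.orderUnit (-b)
    rw [he, smul_zero] at hr hr'
    have h1 : -(0:A.carrier) ≤ b := A.neg_le_of_neg_le' hr'
    rw [neg_zero] at h1
    exact le_antisymm hr h1
  · exfalso
    classical
    set s : PointedCone ℝ A.carrier :=
      { carrier := {x : A.carrier | 0 ≤ x}
        zero_mem' := le_rfl
        smul_mem' := fun c x hx => A.smul_nonneg' c x c.2 hx
        add_mem' := fun {x y} hx hy => by
          have h2 := A.add_le_add_left' 0 y hy x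
          rw [add_zero] at h2
          exact le_trans hx h2 } with hsdef
    set f : A.carrier →ₗ.[ℝ] ℝ := LinearPMap.mkSpanSingleton A.e (1:ℝ) he with hfdef
    have hmemdom : A.e ∈ f.domain := by
      rw [hfdef]
      exact Submodule.subset_span (Set.mem_singleton _)
    have hfe : f ⟨A.e, hmemdom⟩ = 1 := LinearPMap.mkSpanSingleton_apply ℝ ℝ he 1
    have hnonneg : ∀ x : f.domain, (x : A.carrier) ∈ s → 0 ≤ f x := by
      rintro ⟨x, hx⟩ hxs
      have hxs' : (0:A.carrier) ≤ x := hxs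
      have hx' : x ∈ Submodule.span ℝ {A.e} := hx
      obtain ⟨t, ht⟩ := Submodule.mem_span_singleton.1 hx'
      have hxe : (⟨x, hx⟩ : f.domain) = t • (⟨A.e, hmemdom⟩ : f.domain) := by
        apply Subtype.ext
        exact ht.symm
      rw [hxe, f.map_smul, hfe, smul_eq_mul, mul_one]
      by_contra hneg
      push_neg at hneg
      have hts : (0:A.carrier) ≤ t • A.e := by rwa [← ht] at hxs'
      have h4 : (0:A.carrier) ≤ (-t⁻¹) • (t • A.e) :=
        A.smul_nonneg' _ _ (neg_nonneg.2 (inv_nonpos.2 hneg.le)) hts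
      have h5 : (-t⁻¹) • (t • A.e) = -A.e := by
        rw [smul_smul]
        have h6 : -t⁻¹ * t = -1 := by
          rw [neg_mul, inv_mul_cancel₀ hneg.ne]
        rw [h6, neg_smul, one_smul]
      rw [h5] at h4
      have h6 := A.add_le_add_left' 0 (-A.e) h4 A.e
      rw [add_zero, add_neg_cancel] at h6
      exact he (le_antisymm h6 A.e_nonneg)
    have hdense : ∀ y : A.carrier, ∃ x : f.domain, (x : A.carrier) + y ∈ s := by
      intro y
      obtain ⟨r, hr⟩ := A.orderUnit (-y)
      refine ⟨⟨r • A.e, ?_⟩, ?_⟩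
      · rw [hfdef]
        exact Submodule.mem_span_singleton.2 ⟨r, rfl⟩
      · have h7 := A.add_le_add_left' (-y) (r • A.e) hr y
        rw [add_neg_cancel] at h7
        show (0:A.carrier) ≤ r • A.e + y
        rwa [add_comm]
    obtain ⟨g, hg1, hg2⟩ := riesz_extension s f hnonneg hdense
    have hge : g A.e = 1 := by
      have h8 := hg1 ⟨A.e, hmemdom⟩
      rw [hfe] at h8
      exact h8
    exact hE.elim ⟨g, hge, fun a ha => hg2 a ha⟩

end OrderUnitSpace
namespace OrderUnitSpace

theorem seminorm_add_zero {M : Type*} [AddCommGroup M] [Module ℝ M] (p : Seminorm ℝ M)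
    {x y : M} (hy : p y = 0) : p (x + y) = p x := by
  have h1 : p (x + y) ≤ p x := by
    have h := map_add_le_add p x y
    rwa [hy, add_zero] at h
  have h2 : p x ≤ p (x + y) := by
    have h := map_add_le_add p (x + y) (-y)
    rw [add_neg_cancel_right] at h
    rwa [map_neg_eq_map, hy, add_zero] at h
  exact le_antisymm h1 h2

variable (B₁ B₂ : OrderUnitSpace)

/-- The bridge function used to build admissible Lip-norms. -/
noncomputable def bridgeFun (R : Set (B₁.State × B₂.State)) (s : ℝ)
    (x : B₁.carrier × B₂.carrier) : ℝ :=
  sSup ((fun p : B₁.State × B₂.State => s * |p.1.1 x.1 - p.2.1 x.2|) '' R)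

variable (R : Set (B₁.State × B₂.State)) (s : ℝ)

theorem bridgeFun_nonneg (hs : 0 ≤ s) (x : B₁.carrier × B₂.carrier) :
    0 ≤ bridgeFun B₁ B₂ R s x := by
  apply Real.sSup_nonneg
  rintro v ⟨p, hp, rfl⟩
  positivity

theorem bridgeFun_bddAbove (hs : 0 ≤ s) (x : B₁.carrier × B₂.carrier) :
    BddAbove ((fun p : B₁.State × B₂.State => s * |p.1.1 x.1 - p.2.1 x.2|) '' R) := by
  obtain ⟨M₁, hM₁0, hM₁⟩ := B₁.exists_state_bound x.1
  obtain ⟨M₂, hM₂0, hM₂⟩ := B₂.exists_state_bound x.2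
  refine ⟨s * (M₁ + M₂), ?_⟩
  rintro v ⟨p, hp, rfl⟩
  have h1 : |p.1.1 x.1 - p.2.1 x.2| ≤ M₁ + M₂ := by
    calc |p.1.1 x.1 - p.2.1 x.2| ≤ |p.1.1 x.1| + |p.2.1 x.2| := abs_sub _ _
      _ ≤ M₁ + M₂ := add_le_add (hM₁ p.1) (hM₂ p.2)
  exact mul_le_mul_of_nonneg_left h1 hs

theorem le_bridgeFun (hs : 0 ≤ s) {p : B₁.State × B₂.State} (hp : p ∈ R)
    (x : B₁.carrier × B₂.carrier) :
    s * |p.1.1 x.1 - p.2.1 x.2| ≤ bridgeFun B₁ B₂ R s x :=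
  le_csSup (bridgeFun_bddAbove B₁ B₂ R s hs x) ⟨p, hp, rfl⟩

theorem bridgeFun_le (hs : 0 ≤ s) {a : ℝ} (ha : 0 ≤ a) {x : B₁.carrier × B₂.carrier}
    (h : ∀ p ∈ R, s * |p.1.1 x.1 - p.2.1 x.2| ≤ a) : bridgeFun B₁ B₂ R s x ≤ a := by
  apply Real.sSup_le _ ha
  rintro v ⟨p, hp, rfl⟩
  exact h p hp

theorem bridgeFun_smul_le (hs : 0 ≤ s) (a : ℝ) (x : B₁.carrier × B₂.carrier) :
    bridgeFun B₁ B₂ R s (a • x) ≤ |a| * bridgeFun B₁ B₂ R s x := by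
  refine bridgeFun_le B₁ B₂ R s hs (mul_nonneg (abs_nonneg a) (bridgeFun_nonneg B₁ B₂ R s hs x)) ?_
  intro p hp
  have h1 : p.1.1 (a • x).1 = a * p.1.1 x.1 := by
    show p.1.1 (a • x.1) = a * p.1.1 x.1
    rw [map_smul]; rfl
  have h2 : p.2.1 (a • x).2 = a * p.2.1 x.2 := by
    show p.2.1 (a • x.2) = a * p.2.1 x.2
    rw [map_smul]; rfl
  have h3 : s * |p.1.1 (a • x).1 - p.2.1 (a • x).2| = |a| * (s * |p.1.1 x.1 - p.2.1 x.2|) := by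
    rw [h1, h2, ← mul_sub, abs_mul]
    ring
  rw [h3]
  exact mul_le_mul_of_nonneg_left (le_bridgeFun B₁ B₂ R s hs hp x) (abs_nonneg a)

/-- The bridge seminorm. -/
noncomputable def bridgeN (hs : 0 ≤ s) : Seminorm ℝ (B₁.carrier × B₂.carrier) where
  toFun := bridgeFun B₁ B₂ R s
  map_zero' := by
    apply le_antisymm
    · refine bridgeFun_le B₁ B₂ R s hs le_rfl ?_
      intro p hp
      simp
    · exact bridgeFun_nonneg B₁ B₂ R s hs 0
  add_le' := by
    intro x y
    refine bridgeFun_le B₁ B₂ R s hs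
      (add_nonneg (bridgeFun_nonneg B₁ B₂ R s hs x) (bridgeFun_nonneg B₁ B₂ R s hs y)) ?_
    intro p hp
    have h1 : p.1.1 (x + y).1 = p.1.1 x.1 + p.1.1 y.1 := by
      show p.1.1 (x.1 + y.1) = _
      rw [map_add]
    have h2 : p.2.1 (x + y).2 = p.2.1 x.2 + p.2.1 y.2 := by
      show p.2.1 (x.2 + y.2) = _
      rw [map_add]
    have h3 : s * |p.1.1 (x + y).1 - p.2.1 (x + y).2| ≤
        s * |p.1.1 x.1 - p.2.1 x.2| + s * |p.1.1 y.1 - p.2.1 y.2| := by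
      rw [h1, h2, ← mul_add]
      apply mul_le_mul_of_nonneg_left _ hs
      calc |p.1.1 x.1 + p.1.1 y.1 - (p.2.1 x.2 + p.2.1 y.2)|
          = |(p.1.1 x.1 - p.2.1 x.2) + (p.1.1 y.1 - p.2.1 y.2)| := by ring_nf
        _ ≤ |p.1.1 x.1 - p.2.1 x.2| + |p.1.1 y.1 - p.2.1 y.2| := abs_add_le _ _
    exact le_trans h3 (add_le_add (le_bridgeFun B₁ B₂ R s hs hp x)
      (le_bridgeFun B₁ B₂ R s hs hp y))
  neg' := by
    intro x
    have hfe : (fun p : B₁.State × B₂.State => s * |p.1.1 (-x).1 - p.2.1 (-x).2|) =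
        fun p : B₁.State × B₂.State => s * |p.1.1 x.1 - p.2.1 x.2| := by
      funext p
      have h1 : p.1.1 (-x).1 = -p.1.1 x.1 := by
        show p.1.1 (-x.1) = _
        rw [map_neg]
      have h2 : p.2.1 (-x).2 = -p.2.1 x.2 := by
        show p.2.1 (-x.2) = _
        rw [map_neg]
      rw [h1, h2]
      congr 1
      rw [← abs_neg]
      congr 1
      ring
    show sSup _ = sSup _
    rw [hfe]
  smul' := by
    intro a x
    apply le_antisymm
    · rw [Real.norm_eq_abs]
      exact bridgeFun_smul_le B₁ B₂ R s hs a x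
    · rcases eq_or_ne a 0 with rfl | ha
      · simp only [norm_zero, zero_mul, zero_smul]
        exact bridgeFun_nonneg B₁ B₂ R s hs 0
      · rw [Real.norm_eq_abs]
        have h1 : bridgeFun B₁ B₂ R s x ≤ |a⁻¹| * bridgeFun B₁ B₂ R s (a • x) := by
          have h2 := bridgeFun_smul_le B₁ B₂ R s hs a⁻¹ (a • x)
          rwa [smul_smul, inv_mul_cancel₀ ha, one_smul] at h2
        calc |a| * bridgeFun B₁ B₂ R s x ≤ |a| * (|a⁻¹| * bridgeFun B₁ B₂ R s (a • x)) :=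
            mul_le_mul_of_nonneg_left h1 (abs_nonneg a)
          _ = bridgeFun B₁ B₂ R s (a • x) := by
            rw [abs_inv, ← mul_assoc, mul_inv_cancel₀ (abs_ne_zero.2 ha), one_mul]

/-- The candidate admissible Lip-norm. -/
noncomputable def bridgeL (L₁ : Seminorm ℝ B₁.carrier) (L₂ : Seminorm ℝ B₂.carrier)
    (hs : 0 ≤ s) : Seminorm ℝ (B₁.carrier × B₂.carrier) :=
  (L₁.comp (LinearMap.fst ℝ B₁.carrier B₂.carrier) ⊔
    L₂.comp (LinearMap.snd ℝ B₁.carrier B₂.carrier)) ⊔ bridgeN B₁ B₂ R s hs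

variable (L₁ : Seminorm ℝ B₁.carrier) (L₂ : Seminorm ℝ B₂.carrier) (hs : 0 ≤ s)

theorem bridgeL_apply (x : B₁.carrier × B₂.carrier) :
    bridgeL B₁ B₂ R s L₁ L₂ hs x = max (max (L₁ x.1) (L₂ x.2)) (bridgeFun B₁ B₂ R s x) := by
  rfl

theorem L₁_le_bridgeL (x : B₁.carrier × B₂.carrier) : L₁ x.1 ≤ bridgeL B₁ B₂ R s L₁ L₂ hs x := by
  rw [bridgeL_apply]
  exact le_max_of_le_left (le_max_left _ _)

theorem L₂_le_bridgeL (x : B₁.carrier × B₂.carrier) : L₂ x.2 ≤ bridgeL B₁ B₂ R s L₁ L₂ hs x := by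
  rw [bridgeL_apply]
  exact le_max_of_le_left (le_max_right _ _)

theorem bridgeFun_le_bridgeL (x : B₁.carrier × B₂.carrier) :
    bridgeFun B₁ B₂ R s x ≤ bridgeL B₁ B₂ R s L₁ L₂ hs x := by
  rw [bridgeL_apply]
  exact le_max_right _ _

theorem bridgeL_le {x : B₁.carrier × B₂.carrier} {a : ℝ} (h1 : L₁ x.1 ≤ a) (h2 : L₂ x.2 ≤ a)
    (h3 : bridgeFun B₁ B₂ R s x ≤ a) : bridgeL B₁ B₂ R s L₁ L₂ hs x ≤ a := by
  rw [bridgeL_apply]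
  exact max_le (max_le h1 h2) h3

end OrderUnitSpace
namespace OrderUnitSpace

variable (B₁ B₂ : OrderUnitSpace)

theorem prod_state_nonneg_left (σ : (B₁.prod B₂).State) {b : B₁.carrier} (hb : 0 ≤ b) :
    0 ≤ σ.1 (b, 0) :=
  σ.2.2 (b, (0:B₂.carrier)) (Prod.le_def.2 ⟨hb, le_rfl⟩)

theorem prod_state_nonneg_right (σ : (B₁.prod B₂).State) {c : B₂.carrier} (hc : 0 ≤ c) :
    0 ≤ σ.1 (0, c) :=
  σ.2.2 ((0:B₁.carrier), c) (Prod.le_def.2 ⟨le_rfl, hc⟩)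

theorem prod_state_sum (σ : (B₁.prod B₂).State) :
    σ.1 (B₁.e, 0) + σ.1 (0, B₂.e) = 1 := by
  have h1 : ((B₁.e, (0:B₂.carrier)) : B₁.carrier × B₂.carrier) + ((0:B₁.carrier), B₂.e)
      = (B₁.e, B₂.e) := by
    simp
  have h2 := map_add σ.1 ((B₁.e, (0:B₂.carrier)) : B₁.carrier × B₂.carrier)
    (((0:B₁.carrier), B₂.e) : B₁.carrier × B₂.carrier)
  rw [h1] at h2
  rw [← h2]
  exact (σ.2.1).symm ▸ rfl

theorem prod_state_left_zero (σ : (B₁.prod B₂).State) (h : σ.1 (B₁.e, 0) = 0)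
    (b : B₁.carrier) : σ.1 (b, 0) = 0 := by
  obtain ⟨M, hM0, hM1, hM2⟩ := B₁.exists_unit_bound b
  have hsmul : (M • ((B₁.e, (0:B₂.carrier)) : B₁.carrier × B₂.carrier)) = (M • B₁.e, 0) := by
    ext
    · rfl
    · show M • (0:B₂.carrier) = 0
      exact smul_zero M
  have hub : ((b, (0:B₂.carrier)) : B₁.carrier × B₂.carrier) ≤
      M • ((B₁.e, (0:B₂.carrier)) : B₁.carrier × B₂.carrier) := by
    rw [hsmul]
    exact Prod.le_def.2 ⟨hM2, le_rfl⟩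
  have hlb : -(M • ((B₁.e, (0:B₂.carrier)) : B₁.carrier × B₂.carrier)) ≤
      ((b, (0:B₂.carrier)) : B₁.carrier × B₂.carrier) := by
    rw [hsmul]
    refine Prod.le_def.2 ⟨hM1, ?_⟩
    show -(0:B₂.carrier) ≤ 0
    rw [neg_zero]
  have h1 := (B₁.prod B₂).state_mono σ hub
  have h2 := (B₁.prod B₂).state_mono σ hlb
  rw [map_smul, smul_eq_mul, h, mul_zero] at h1
  rw [map_neg, map_smul, smul_eq_mul, h, mul_zero, neg_zero] at h2
  exact le_antisymm h1 h2

theorem prod_state_right_zero (σ : (B₁.prod B₂).State) (h : σ.1 (0, B₂.e) = 0)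
    (c : B₂.carrier) : σ.1 (0, c) = 0 := by
  obtain ⟨M, hM0, hM1, hM2⟩ := B₂.exists_unit_bound c
  have hsmul : (M • (((0:B₁.carrier), B₂.e) : B₁.carrier × B₂.carrier)) = (0, M • B₂.e) := by
    ext
    · show M • (0:B₁.carrier) = 0
      exact smul_zero M
    · rfl
  have hub : (((0:B₁.carrier), c) : B₁.carrier × B₂.carrier) ≤
      M • (((0:B₁.carrier), B₂.e) : B₁.carrier × B₂.carrier) := by
    rw [hsmul]
    exact Prod.le_def.2 ⟨le_rfl, hM2⟩
  have hlb : -(M • (((0:B₁.carrier), B₂.e) : B₁.carrier × B₂.carrier)) ≤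
      (((0:B₁.carrier), c) : B₁.carrier × B₂.carrier) := by
    rw [hsmul]
    refine Prod.le_def.2 ⟨?_, hM1⟩
    show -(0:B₁.carrier) ≤ 0
    rw [neg_zero]
  have h1 := (B₁.prod B₂).state_mono σ hub
  have h2 := (B₁.prod B₂).state_mono σ hlb
  rw [map_smul, smul_eq_mul, h, mul_zero] at h1
  rw [map_neg, map_smul, smul_eq_mul, h, mul_zero, neg_zero] at h2
  exact le_antisymm h1 h2

theorem prod_state_decomp (f₀ : B₁.State) (g₀ : B₂.State) (σ : (B₁.prod B₂).State) :
    ∃ (t : ℝ) (f : B₁.State) (g : B₂.State), σ.1 (B₁.e, 0) = t ∧ 0 ≤ t ∧ t ≤ 1 ∧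
      (∀ b, t * f.1 b = σ.1 (b, 0)) ∧ (∀ c, (1 - t) * g.1 c = σ.1 (0, c)) := by
  classical
  set t := σ.1 (B₁.e, 0) with htdef
  have ht0 : 0 ≤ t := prod_state_nonneg_left B₁ B₂ σ B₁.e_nonneg
  have hsum := prod_state_sum B₁ B₂ σ
  have hu0 : 0 ≤ σ.1 (0, B₂.e) := prod_state_nonneg_right B₁ B₂ σ B₂.e_nonneg
  have ht1 : t ≤ 1 := by rw [htdef]; linarith
  have hf : ∃ f : B₁.State, ∀ b, t * f.1 b = σ.1 (b, 0) := by
    by_cases ht : 0 < t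
    · refine ⟨⟨t⁻¹ • σ.1.comp (LinearMap.inl ℝ B₁.carrier B₂.carrier), ?_, ?_⟩, ?_⟩
      · show t⁻¹ * σ.1 (B₁.e, 0) = 1
        rw [← htdef]
        field_simp
      · intro a ha
        have := prod_state_nonneg_left B₁ B₂ σ ha
        show 0 ≤ t⁻¹ * σ.1 (a, 0)
        positivity
      · intro b
        show t * (t⁻¹ * σ.1 (b, 0)) = σ.1 (b, 0)
        field_simp
    · have htz : t = 0 := le_antisymm (not_lt.1 ht) ht0
      refine ⟨f₀, fun b => ?_⟩
      rw [htz, zero_mul, prod_state_left_zero B₁ B₂ σ (htdef ▸ htz) b]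
  have hg : ∃ g : B₂.State, ∀ c, (1 - t) * g.1 c = σ.1 (0, c) := by
    have hu : σ.1 (0, B₂.e) = 1 - t := by rw [htdef]; linarith
    by_cases htu : 0 < 1 - t
    · refine ⟨⟨(1-t)⁻¹ • σ.1.comp (LinearMap.inr ℝ B₁.carrier B₂.carrier), ?_, ?_⟩, ?_⟩
      · show (1-t)⁻¹ * σ.1 (0, B₂.e) = 1
        rw [hu]
        field_simp
      · intro a ha
        have := prod_state_nonneg_right B₁ B₂ σ ha
        show 0 ≤ (1-t)⁻¹ * σ.1 (0, a)
        positivity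
      · intro c
        show (1 - t) * ((1-t)⁻¹ * σ.1 (0, c)) = σ.1 (0, c)
        field_simp
    · have htz : (1:ℝ) - t = 0 := by
        have := sub_nonneg.2 ht1
        linarith [not_lt.1 htu]
      refine ⟨g₀, fun c => ?_⟩
      rw [htz, zero_mul, prod_state_right_zero B₁ B₂ σ (by rw [hu, htz]) c]
  obtain ⟨f, hff⟩ := hf
  obtain ⟨g, hgg⟩ := hg
  exact ⟨t, f, g, rfl, ht0, ht1, hff, hgg⟩

variable (R : Set (B₁.State × B₂.State)) (s : ℝ) (L₁ : Seminorm ℝ B₁.carrier)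
  (L₂ : Seminorm ℝ B₂.carrier)

theorem bridgeL_unit_smul_zero (hs : 0 ≤ s) (hL₁ : B₁.IsLipschitz L₁)
    (hL₂ : B₂.IsLipschitz L₂) (a : ℝ) :
    bridgeL B₁ B₂ R s L₁ L₂ hs (a • ((B₁.prod B₂).e)) = 0 := by
  have he₁ : L₁ (a • B₁.e) = 0 := by
    rw [map_smul_eq_mul, (hL₁ B₁.e).2 ⟨1, (one_smul ℝ B₁.e).symm⟩, mul_zero]
  have he₂ : L₂ (a • B₂.e) = 0 := by
    rw [map_smul_eq_mul, (hL₂ B₂.e).2 ⟨1, (one_smul ℝ B₂.e).symm⟩, mul_zero]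
  have hcomp : (a • ((B₁.prod B₂).e)) = ((a • B₁.e, a • B₂.e) : B₁.carrier × B₂.carrier) := rfl
  apply le_antisymm
  · apply bridgeL_le
    · rw [hcomp]; exact he₁.le
    · rw [hcomp]; exact he₂.le
    · refine bridgeFun_le B₁ B₂ R s hs le_rfl ?_
      intro p hp
      have h1 : p.1.1 (a • ((B₁.prod B₂).e)).1 = a := by
        show p.1.1 (a • B₁.e) = a
        exact B₁.state_smul_e p.1 a
      have h2 : p.2.1 (a • ((B₁.prod B₂).e)).2 = a := by
        show p.2.1 (a • B₂.e) = a
        exact B₂.state_smul_e p.2 a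
      rw [h1, h2, sub_self, abs_zero, mul_zero]
  · exact apply_nonneg _ _

theorem bridgeL_isLipschitz (hspos : 0 < s) (hL₁ : B₁.IsLipschitz L₁)
    (hL₂ : B₂.IsLipschitz L₂) {fR : B₁.State} {gR : B₂.State} (hfg : (fR, gR) ∈ R) :
    (B₁.prod B₂).IsLipschitz (bridgeL B₁ B₂ R s L₁ L₂ hspos.le) := by
  intro x
  constructor
  · intro hx
    have h1 : L₁ x.1 = 0 :=
      le_antisymm (le_trans (L₁_le_bridgeL B₁ B₂ R s L₁ L₂ hspos.le x) hx.le) (apply_nonneg _ _)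
    have h2 : L₂ x.2 = 0 :=
      le_antisymm (le_trans (L₂_le_bridgeL B₁ B₂ R s L₁ L₂ hspos.le x) hx.le) (apply_nonneg _ _)
    obtain ⟨a, ha⟩ := (hL₁ x.1).1 h1
    obtain ⟨b, hb⟩ := (hL₂ x.2).1 h2
    have hN : s * |fR.1 x.1 - gR.1 x.2| ≤ 0 := by
      refine le_trans (le_bridgeFun B₁ B₂ R s hspos.le hfg x) ?_
      exact le_trans (bridgeFun_le_bridgeL B₁ B₂ R s L₁ L₂ hspos.le x) hx.le
    have hab : a = b := by
      have h3 : fR.1 x.1 = a := by rw [ha]; exact B₁.state_smul_e fR a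
      have h4 : gR.1 x.2 = b := by rw [hb]; exact B₂.state_smul_e gR b
      have h5 : |fR.1 x.1 - gR.1 x.2| ≤ 0 := by
        by_contra hcon
        push_neg at hcon
        nlinarith
      rw [h3, h4] at h5
      have := abs_nonneg (a - b)
      have h6 : |a - b| = 0 := le_antisymm h5 this
      have := abs_eq_zero.1 h6
      linarith
    refine ⟨a, ?_⟩
    have hx1 : x.1 = a • B₁.e := ha
    have hx2 : x.2 = a • B₂.e := by rw [hb, hab]
    exact Prod.ext hx1 hx2
  · rintro ⟨a, rfl⟩
    exact bridgeL_unit_smul_zero B₁ B₂ R s L₁ L₂ hspos.le hL₁ hL₂ a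

end OrderUnitSpace
namespace OrderUnitSpace

set_option maxHeartbeats 1000000 in
theorem side_control (P B : OrderUnitSpace) {LB : Seminorm ℝ B.carrier} (hLB : B.IsLipNorm LB)
    (DB : ℝ) (hDB : 0 ≤ DB) (j : B.carrier →ₗ[ℝ] P.carrier)
    (σ : P.State) (t : ℝ) (f : B.State) (hd : ∀ b, t * f.1 b = σ.1 (j b))
    (ht0 : 0 ≤ t) (ht1 : t ≤ 1) {ε' : ℝ} (hε' : 0 < ε') :
    ∃ U : Set P.State, IsOpen U ∧ σ ∈ U ∧ ∀ σ' ∈ U, ∀ (t' : ℝ) (f' : B.State),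
      (∀ b, t' * f'.1 b = σ'.1 (j b)) → 0 ≤ t' → t' ≤ 1 →
      ∀ b, LB b ≤ 1 → (∀ h : B.State, |h.1 b| ≤ DB) → t' * |f.1 b - f'.1 b| ≤ ε' := by
  have htσ : σ.1 (j B.e) = t := by rw [← hd B.e, f.2.1, mul_one]
  by_cases htpos : 0 < t
  · obtain ⟨I, η₁, hη₁, hctrl⟩ := B.exists_finset_control hLB f hε'
    classical
    obtain ⟨η₂, hη₂, hη₂le⟩ := finset_exists_pos_le I
      (fun b => η₁ * t / (8 * (|f.1 b| + 1)))
      (fun b _ => by positivity)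
    set η₀ := min (t/2) η₂ with hη₀def
    have hη₀ : 0 < η₀ := lt_min (by positivity) hη₂
    set κ := η₁ * t / 8 with hκdef
    have hκpos : 0 < κ := by positivity
    refine ⟨{σ' : P.State | |σ'.1 (j B.e) - σ.1 (j B.e)| < η₀} ∩
      ⋂ b ∈ I, {σ' : P.State | |σ'.1 (j b) - σ.1 (j b)| < κ}, ?_, ?_, ?_⟩
    · exact (P.isOpen_evalBall _ _ _).inter
        (isOpen_biInter_finset fun b _ => P.isOpen_evalBall _ _ _)
    · constructor
      · simp only [Set.mem_setOf_eq, sub_self, abs_zero]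
        exact hη₀
      · simp only [Set.mem_iInter, Set.mem_setOf_eq, sub_self, abs_zero]
        intro b hb
        exact hκpos
    · intro σ' hσ' t' f' hd' ht0' ht1' b hLb hbnd
      obtain ⟨hσ'0, hσ'I⟩ := hσ'
      rw [Set.mem_iInter₂] at hσ'I
      have ht'σ : σ'.1 (j B.e) = t' := by rw [← hd' B.e, f'.2.1, mul_one]
      have htt' : |t' - t| < η₀ := by
        have h := hσ'0
        rwa [Set.mem_setOf_eq, ht'σ, htσ] at h
      have ht'half : t/2 ≤ t' := by
        have habs := abs_lt.1 htt'
        have hη₀le : η₀ ≤ t/2 := min_le_left _ _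
        linarith [habs.1]
      have hclose : ∀ b' ∈ I, |f'.1 b' - f.1 b'| < η₁ := by
        intro b' hb'
        have hc : |σ'.1 (j b') - σ.1 (j b')| < κ := hσ'I b' hb'
        have hnum : t' * (f'.1 b' - f.1 b') =
            (σ'.1 (j b') - σ.1 (j b')) - (t' - t) * f.1 b' := by
          linear_combination hd' b' - hd b'
        have habs2 : t' * |f'.1 b' - f.1 b'| ≤ κ + η₀ * |f.1 b'| := by
          calc t' * |f'.1 b' - f.1 b'| = |t' * (f'.1 b' - f.1 b')| := by
                rw [abs_mul, abs_of_nonneg ht0']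
            _ = |(σ'.1 (j b') - σ.1 (j b')) - (t' - t) * f.1 b'| := by rw [hnum]
            _ ≤ |σ'.1 (j b') - σ.1 (j b')| + |(t' - t) * f.1 b'| := abs_sub _ _
            _ = |σ'.1 (j b') - σ.1 (j b')| + |t' - t| * |f.1 b'| := by rw [abs_mul]
            _ ≤ κ + η₀ * |f.1 b'| :=
                add_le_add hc.le (mul_le_mul_of_nonneg_right htt'.le (abs_nonneg _))
        have hη₀b : η₀ * |f.1 b'| ≤ η₁ * t / 8 := by
          have h1 := hη₂le b' hb'
          have h2 : η₀ ≤ η₁ * t / (8 * (|f.1 b'| + 1)) := le_trans (min_le_right _ _) h1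
          have h3 : 0 ≤ |f.1 b'| := abs_nonneg _
          have h4 : 0 < 8 * (|f.1 b'| + 1) := by positivity
          rw [le_div_iff₀ h4] at h2
          nlinarith
        nlinarith [abs_nonneg (f'.1 b' - f.1 b'), ht'half, habs2, hη₀b, hη₁, htpos]
      have hrho := hctrl f' hclose
      have habs' : |f.1 b - f'.1 b| ≤ ε' := B.abs_le_of_rho_le_one hLB.1 hε'.le hrho hLb
      calc t' * |f.1 b - f'.1 b| ≤ |f.1 b - f'.1 b| :=
            mul_le_of_le_one_left (abs_nonneg _) ht1'
        _ ≤ ε' := habs'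
  · have htz : t = 0 := le_antisymm (not_lt.1 htpos) ht0
    set η₀ := min 1 (ε' / (2 * DB + 1)) with hη₀def
    have hη₀ : 0 < η₀ := lt_min one_pos (by positivity)
    refine ⟨{σ' : P.State | |σ'.1 (j B.e) - σ.1 (j B.e)| < η₀}, P.isOpen_evalBall _ _ _, ?_, ?_⟩
    · simp only [Set.mem_setOf_eq, sub_self, abs_zero]
      exact hη₀
    · intro σ' hσ' t' f' hd' ht0' ht1' b hLb hbnd
      have ht'σ : σ'.1 (j B.e) = t' := by rw [← hd' B.e, f'.2.1, mul_one]
      have ht' : t' < η₀ := by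
        have h := hσ'
        rw [Set.mem_setOf_eq, ht'σ, htσ, htz, sub_zero] at h
        exact lt_of_le_of_lt (le_abs_self t') h
      have h2DB : |f.1 b - f'.1 b| ≤ 2 * DB := by
        calc |f.1 b - f'.1 b| ≤ |f.1 b| + |f'.1 b| := abs_sub _ _
          _ ≤ DB + DB := add_le_add (hbnd f) (hbnd f')
          _ = 2 * DB := by ring
      have hη₀le : η₀ ≤ ε' / (2 * DB + 1) := min_le_right _ _
      have h5 : 0 < 2 * DB + 1 := by positivity
      have h6 : t' * |f.1 b - f'.1 b| ≤ t' * (2 * DB) :=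
        mul_le_mul_of_nonneg_left h2DB ht0'
      have h7 : t' ≤ ε' / (2 * DB + 1) := le_trans ht'.le hη₀le
      rw [le_div_iff₀ h5] at h7
      nlinarith [abs_nonneg (f.1 b - f'.1 b)]

end OrderUnitSpace
namespace OrderUnitSpace

set_option maxHeartbeats 2000000 in
theorem bridge_key (B₁ B₂ : OrderUnitSpace)
    {L₁ : Seminorm ℝ B₁.carrier} {L₂ : Seminorm ℝ B₂.carrier}
    (hL₁ : B₁.IsLipNorm L₁) (hL₂ : B₂.IsLipNorm L₂)
    {δ : ℝ} (hδ : 0 < δ) (R : Set (B₁.State × B₂.State))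
    {fR : B₁.State} {gR : B₂.State} (hfg : (fR, gR) ∈ R)
    (D₁ D₂ : ℝ) (hD₁0 : 0 ≤ D₁) (hD₂0 : 0 ≤ D₂)
    (hD₁ : ∀ (h h' : B₁.State) (b : B₁.carrier), L₁ b ≤ 1 → |h.1 b - h'.1 b| ≤ D₁)
    (hD₂ : ∀ (h h' : B₂.State) (c : B₂.carrier), L₂ c ≤ 1 → |h.1 c - h'.1 c| ≤ D₂)
    (σ : (B₁.prod B₂).State) (ε : ℝ) (hε : 0 < ε) :
    ∃ U : Set (B₁.prod B₂).State, IsOpen U ∧ σ ∈ U ∧ ∀ σ' ∈ U,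
      (B₁.prod B₂).rho (bridgeL B₁ B₂ R δ⁻¹ L₁ L₂ (inv_nonneg.2 hδ.le)) σ σ' ≤
        ENNReal.ofReal ε := by
  classical
  set s : ℝ := δ⁻¹ with hsdef
  have hs : 0 ≤ s := inv_nonneg.2 hδ.le
  set L := bridgeL B₁ B₂ R s L₁ L₂ (inv_nonneg.2 hδ.le) with hLdef
  set C : ℝ := D₁ + (D₂ + δ) with hCdef
  have hC0 : 0 ≤ C := by positivity
  have hε3 : 0 < ε / 3 := by positivity
  obtain ⟨t, f, g, htσ, ht0, ht1, hdf, hdg⟩ := prod_state_decomp B₁ B₂ fR gR σ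
  set j₁ := LinearMap.inl ℝ B₁.carrier B₂.carrier with hj₁def
  set j₂ := LinearMap.inr ℝ B₁.carrier B₂.carrier with hj₂def
  obtain ⟨U₁, hU₁open, hU₁σ, hU₁⟩ := side_control (B₁.prod B₂) B₁ hL₁ D₁ hD₁0 j₁ σ t f
    (fun b => hdf b) ht0 ht1 hε3
  obtain ⟨U₂, hU₂open, hU₂σ, hU₂⟩ := side_control (B₁.prod B₂) B₂ hL₂ (D₂ + δ)
    (by positivity) j₂ σ (1 - t) g (fun c => hdg c) (by linarith) (by linarith) hε3
  set η₀ := ε / (3 * (C + 1)) with hη₀def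
  have hη₀ : 0 < η₀ := by positivity
  set U₀ : Set (B₁.prod B₂).State := {σ' | |σ'.1 (B₁.e, 0) - t| < η₀} with hU₀def
  refine ⟨U₀ ∩ (U₁ ∩ U₂), ((B₁.prod B₂).isOpen_evalBall _ _ _).inter (hU₁open.inter hU₂open),
    ⟨by simp only [hU₀def, Set.mem_setOf_eq, htσ, sub_self, abs_zero]; exact hη₀,
     hU₁σ, hU₂σ⟩, ?_⟩
  rintro σ' ⟨hσ'0, hσ'1, hσ'2⟩
  obtain ⟨t', f', g', ht'σ, ht0', ht1', hdf', hdg'⟩ := prod_state_decomp B₁ B₂ fR gR σ'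
  have htt' : |t' - t| < η₀ := by
    have h := hσ'0
    rwa [hU₀def, Set.mem_setOf_eq, ht'σ] at h
  refine iSup_le ?_
  rintro ⟨x, hx⟩
  simp only
  -- shift x by a multiple of the order unit
  set sh := fR.1 x.1 with hshdef
  set y := x + (-sh) • ((B₁.prod B₂).e) with hydef
  have hLy : L y = L x := seminorm_add_zero L
    (bridgeL_unit_smul_zero B₁ B₂ R s L₁ L₂ (inv_nonneg.2 hδ.le) hL₁.1 hL₂.1 (-sh))
  have hLy1 : L y ≤ 1 := by rw [hLy]; exact hx
  have hy1 : y.1 = x.1 + (-sh) • B₁.e := rfl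
  have hy2 : y.2 = x.2 + (-sh) • B₂.e := rfl
  have hfRy : fR.1 y.1 = 0 := by
    rw [hy1, map_add, map_smul, fR.2.1, smul_eq_mul, mul_one, hshdef]
    ring
  have hb1 : L₁ y.1 ≤ 1 := le_trans (L₁_le_bridgeL B₁ B₂ R s L₁ L₂ _ y) hLy1
  have hc1 : L₂ y.2 ≤ 1 := le_trans (L₂_le_bridgeL B₁ B₂ R s L₁ L₂ _ y) hLy1
  have hNy : bridgeFun B₁ B₂ R s y ≤ 1 :=
    le_trans (bridgeFun_le_bridgeL B₁ B₂ R s L₁ L₂ _ y) hLy1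
  have hgRy : |gR.1 y.2| ≤ δ := by
    have h1 := le_bridgeFun B₁ B₂ R s hs hfg y
    have h2 : |fR.1 y.1 - gR.1 y.2| = |gR.1 y.2| := by
      rw [hfRy, zero_sub, abs_neg]
    rw [h2] at h1
    have h3 : s * |gR.1 y.2| ≤ 1 := le_trans h1 hNy
    rw [hsdef] at h3
    have h4 : 0 ≤ |gR.1 y.2| := abs_nonneg _
    have h5 : δ⁻¹ * δ = 1 := inv_mul_cancel₀ hδ.ne'
    nlinarith
  have hbndb : ∀ h : B₁.State, |h.1 y.1| ≤ D₁ := by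
    intro h
    have h1 := hD₁ h fR y.1 hb1
    rwa [hfRy, sub_zero] at h1
  have hbndc : ∀ k : B₂.State, |k.1 y.2| ≤ D₂ + δ := by
    intro k
    have h1 := hD₂ k gR y.2 hc1
    calc |k.1 y.2| = |(k.1 y.2 - gR.1 y.2) + gR.1 y.2| := by ring_nf
      _ ≤ |k.1 y.2 - gR.1 y.2| + |gR.1 y.2| := abs_add_le _ _
      _ ≤ D₂ + δ := add_le_add h1 hgRy
  have hS1 := hU₁ σ' hσ'1 t' f' (fun b => hdf' b) ht0' ht1' y.1 hb1 hbndb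
  have hS2 := hU₂ σ' hσ'2 (1 - t') g' (fun c => hdg' c) (by linarith) (by linarith) y.2 hc1 hbndc
  have hfbgc : |f.1 y.1 - g.1 y.2| ≤ C := by
    calc |f.1 y.1 - g.1 y.2| ≤ |f.1 y.1| + |g.1 y.2| := abs_sub _ _
      _ ≤ D₁ + (D₂ + δ) := add_le_add (hbndb f) (hbndc g)
  have hsplit : ∀ τ : (B₁.prod B₂).State, τ.1 y = τ.1 (y.1, 0) + τ.1 (0, y.2) := by
    intro τ
    rw [← map_add]
    congr 1
    ext
    · show y.1 = y.1 + 0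
      rw [add_zero]
    · show y.2 = 0 + y.2
      rw [zero_add]
  have hσy : σ.1 y = t * f.1 y.1 + (1 - t) * g.1 y.2 := by
    rw [hsplit σ, ← hdf y.1, ← hdg y.2]
  have hσ'y : σ'.1 y = t' * f'.1 y.1 + (1 - t') * g'.1 y.2 := by
    rw [hsplit σ', ← hdf' y.1, ← hdg' y.2]
  have hdiff : σ.1 x - σ'.1 x = σ.1 y - σ'.1 y := by
    have h1 : σ.1 y = σ.1 x + (-sh) * 1 := by
      rw [hydef, map_add, map_smul, σ.2.1, smul_eq_mul]
    have h2 : σ'.1 y = σ'.1 x + (-sh) * 1 := by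
      rw [hydef, map_add, map_smul, σ'.2.1, smul_eq_mul]
    rw [h1, h2]
    ring
  have halg : σ.1 y - σ'.1 y = t' * (f.1 y.1 - f'.1 y.1) + (1 - t') * (g.1 y.2 - g'.1 y.2)
      + (t - t') * (f.1 y.1 - g.1 y.2) := by
    rw [hσy, hσ'y]
    ring
  have habs : |σ.1 x - σ'.1 x| ≤ ε := by
    rw [hdiff, halg]
    have h3 : |(t - t') * (f.1 y.1 - g.1 y.2)| ≤ η₀ * C := by
      rw [abs_mul]
      have htt'2 : |t - t'| ≤ η₀ := by
        rw [abs_sub_comm]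
        exact htt'.le
      exact mul_le_mul htt'2 hfbgc (abs_nonneg _) hη₀.le
    have hη₀C : η₀ * C ≤ ε / 3 := by
      rw [hη₀def]
      rw [div_mul_eq_mul_div, div_le_div_iff₀ (by positivity) (by norm_num)]
      nlinarith
    calc |t' * (f.1 y.1 - f'.1 y.1) + (1 - t') * (g.1 y.2 - g'.1 y.2)
        + (t - t') * (f.1 y.1 - g.1 y.2)|
        ≤ |t' * (f.1 y.1 - f'.1 y.1)| + |(1 - t') * (g.1 y.2 - g'.1 y.2)|
          + |(t - t') * (f.1 y.1 - g.1 y.2)| := abs_add_three _ _ _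
      _ = t' * |f.1 y.1 - f'.1 y.1| + (1 - t') * |g.1 y.2 - g'.1 y.2|
          + |(t - t') * (f.1 y.1 - g.1 y.2)| := by
          rw [abs_mul, abs_mul, abs_of_nonneg ht0', abs_of_nonneg (by linarith : (0:ℝ) ≤ 1 - t')]
      _ ≤ ε / 3 + ε / 3 + η₀ * C := add_le_add (add_le_add hS1 hS2) h3
      _ ≤ ε := by linarith
  exact ENNReal.ofReal_le_ofReal habs

end OrderUnitSpace
namespace OrderUnitSpace

theorem bridgeL_isLipNorm (B₁ B₂ : OrderUnitSpace)
    {L₁ : Seminorm ℝ B₁.carrier} {L₂ : Seminorm ℝ B₂.carrier}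
    (hL₁ : B₁.IsLipNorm L₁) (hL₂ : B₂.IsLipNorm L₂)
    {δ : ℝ} (hδ : 0 < δ) (R : Set (B₁.State × B₂.State))
    {fR : B₁.State} {gR : B₂.State} (hfg : (fR, gR) ∈ R)
    (D₁ D₂ : ℝ) (hD₁0 : 0 ≤ D₁) (hD₂0 : 0 ≤ D₂)
    (hD₁ : ∀ (h h' : B₁.State) (b : B₁.carrier), L₁ b ≤ 1 → |h.1 b - h'.1 b| ≤ D₁)
    (hD₂ : ∀ (h h' : B₂.State) (c : B₂.carrier), L₂ c ≤ 1 → |h.1 c - h'.1 c| ≤ D₂) :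
    (B₁.prod B₂).IsLipNorm (bridgeL B₁ B₂ R δ⁻¹ L₁ L₂ (inv_nonneg.2 hδ.le)) := by
  have hlip : (B₁.prod B₂).IsLipschitz (bridgeL B₁ B₂ R δ⁻¹ L₁ L₂ (inv_nonneg.2 hδ.le)) :=
    bridgeL_isLipschitz B₁ B₂ R δ⁻¹ L₁ L₂ (inv_pos.2 hδ) hL₁.1 hL₂.1 hfg
  refine ⟨hlip, le_antisymm ((B₁.prod B₂).ballTopology_le_weak hlip)
    ((B₁.prod B₂).weak_le_ballTopology ?_)⟩
  intro σ ε hε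
  exact bridge_key B₁ B₂ hL₁ hL₂ hδ R hfg D₁ D₂ hD₁0 hD₂0 hD₁ hD₂ σ ε hε

theorem quot_seminorm_le (A B : OrderUnitSpace) (LA : Seminorm ℝ A.carrier)
    (LB : Seminorm ℝ B.carrier) (π : A.carrier →ₗ[ℝ] B.carrier)
    (hq : Induces π (fun a => LA a) (fun b => LB b)) (a : A.carrier) :
    LB (π a) ≤ LA a := by
  have h : LB (π a) = sInf {r : ℝ | ∃ a', π a' = π a ∧ LA a' = r} := hq (π a)
  rw [h]
  refine csInf_le ⟨0, ?_⟩ ⟨a, rfl, rfl⟩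
  rintro r ⟨a', _, rfl⟩
  exact apply_nonneg LA a'

theorem quot_seminorm_exists (A B : OrderUnitSpace) (LA : Seminorm ℝ A.carrier)
    (LB : Seminorm ℝ B.carrier) (π : A.carrier →ₗ[ℝ] B.carrier)
    (hs : Function.Surjective π)
    (hq : Induces π (fun a => LA a) (fun b => LB b)) (b : B.carrier) {ε : ℝ} (hε : 0 < ε) :
    ∃ a : A.carrier, π a = b ∧ LA a < LB b + ε := by
  have h : LB b = sInf {r : ℝ | ∃ a, π a = b ∧ LA a = r} := hq b
  have hne : {r : ℝ | ∃ a, π a = b ∧ LA a = r}.Nonempty := by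
    obtain ⟨a, ha⟩ := hs b
    exact ⟨LA a, a, ha, rfl⟩
  have hlt : sInf {r : ℝ | ∃ a, π a = b ∧ LA a = r} < LB b + ε := by
    rw [← h]
    linarith
  obtain ⟨r, ⟨a, ha, rfl⟩, hr⟩ := exists_lt_of_csInf_lt hne hlt
  exact ⟨a, ha, hr⟩

theorem bridgeL_induces (A B₁ B₂ : OrderUnitSpace) (LA : Seminorm ℝ A.carrier)
    (hLA : A.IsLipNorm LA)
    (L₁ : Seminorm ℝ B₁.carrier) (L₂ : Seminorm ℝ B₂.carrier)
    (π₁ : A.carrier →ₗ[ℝ] B₁.carrier) (π₂ : A.carrier →ₗ[ℝ] B₂.carrier)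
    (hπ₁ : A.IsMorphism B₁ π₁) (hπ₂ : A.IsMorphism B₂ π₂)
    (hs₁ : Function.Surjective π₁) (hs₂ : Function.Surjective π₂)
    (hq₁ : Induces π₁ (fun a => LA a) (fun b => L₁ b))
    (hq₂ : Induces π₂ (fun a => LA a) (fun b => L₂ b))
    {δ : ℝ} (hδ : 0 < δ) (R : Set (B₁.State × B₂.State))
    (hR : ∀ p ∈ R, A.rho LA (A.pullState B₁ π₁ hπ₁ p.1) (A.pullState B₂ π₂ hπ₂ p.2) ≤
      ENNReal.ofReal δ) :
    Induces (Prod.fst : B₁.carrier × B₂.carrier → B₁.carrier)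
      (fun p => bridgeL B₁ B₂ R δ⁻¹ L₁ L₂ (inv_nonneg.2 hδ.le) p) (fun b => L₁ b) ∧
    Induces (Prod.snd : B₁.carrier × B₂.carrier → B₂.carrier)
      (fun p => bridgeL B₁ B₂ R δ⁻¹ L₁ L₂ (inv_nonneg.2 hδ.le) p) (fun b => L₂ b) := by
  set s : ℝ := δ⁻¹ with hsdef
  have hs : 0 ≤ s := inv_nonneg.2 hδ.le
  set L := bridgeL B₁ B₂ R s L₁ L₂ (inv_nonneg.2 hδ.le) with hLdef
  -- the key bound on pairs in R
  have hkey : ∀ p ∈ R, ∀ a : A.carrier, |p.1.1 (π₁ a) - p.2.1 (π₂ a)| ≤ δ * LA a := by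
    intro p hp a
    have h := A.abs_le_of_rho_le hLA.1 hδ.le (hR p hp) a
    exact h
  constructor
  · intro b
    show L₁ b = quotientSeminorm Prod.fst (fun p => L p) b
    rw [quotientSeminorm]
    have hbdd : BddBelow {r : ℝ | ∃ p : B₁.carrier × B₂.carrier, p.1 = b ∧ L p = r} := by
      refine ⟨0, ?_⟩
      rintro r ⟨p, _, rfl⟩
      exact apply_nonneg L p
    apply le_antisymm
    · refine le_csInf ⟨L (b, 0), (b, 0), rfl, rfl⟩ ?_
      rintro r ⟨p, hp1, rfl⟩
      rw [← hp1]
      exact L₁_le_bridgeL B₁ B₂ R s L₁ L₂ _ p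
    · refine le_of_forall_pos_le_add ?_
      intro ε hε
      obtain ⟨a, ha, hLAa⟩ := quot_seminorm_exists A B₁ LA L₁ π₁ hs₁ hq₁ b hε
      have hLbound : L (b, π₂ a) ≤ L₁ b + ε := by
        apply bridgeL_le
        · show L₁ b ≤ L₁ b + ε
          linarith
        · show L₂ (π₂ a) ≤ L₁ b + ε
          exact le_trans (quot_seminorm_le A B₂ LA L₂ π₂ hq₂ a) hLAa.le
        · refine bridgeFun_le B₁ B₂ R s hs (by positivity) ?_
          intro p hp
          have h1 : |p.1.1 b - p.2.1 (π₂ a)| ≤ δ * LA a := by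
            rw [← ha]
            exact hkey p hp a
          have h2 : s * |p.1.1 b - p.2.1 (π₂ a)| ≤ LA a := by
            rw [hsdef]
            have h3 : 0 ≤ |p.1.1 b - p.2.1 (π₂ a)| := abs_nonneg _
            have h4 : δ⁻¹ * δ = 1 := inv_mul_cancel₀ hδ.ne'
            nlinarith [apply_nonneg LA a]
          exact le_trans h2 hLAa.le
      exact le_trans (csInf_le hbdd ⟨(b, π₂ a), rfl, rfl⟩) hLbound
  · intro c
    show L₂ c = quotientSeminorm Prod.snd (fun p => L p) c
    rw [quotientSeminorm]
    have hbdd : BddBelow {r : ℝ | ∃ p : B₁.carrier × B₂.carrier, p.2 = c ∧ L p = r} := by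
      refine ⟨0, ?_⟩
      rintro r ⟨p, _, rfl⟩
      exact apply_nonneg L p
    apply le_antisymm
    · refine le_csInf ⟨L (0, c), (0, c), rfl, rfl⟩ ?_
      rintro r ⟨p, hp1, rfl⟩
      rw [← hp1]
      exact L₂_le_bridgeL B₁ B₂ R s L₁ L₂ _ p
    · refine le_of_forall_pos_le_add ?_
      intro ε hε
      obtain ⟨a, ha, hLAa⟩ := quot_seminorm_exists A B₂ LA L₂ π₂ hs₂ hq₂ c hε
      have hLbound : L (π₁ a, c) ≤ L₂ c + ε := by
        apply bridgeL_le
        · show L₁ (π₁ a) ≤ L₂ c + ε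
          exact le_trans (quot_seminorm_le A B₁ LA L₁ π₁ hq₁ a) hLAa.le
        · show L₂ c ≤ L₂ c + ε
          linarith
        · refine bridgeFun_le B₁ B₂ R s hs (by positivity) ?_
          intro p hp
          have h1 : |p.1.1 (π₁ a) - p.2.1 c| ≤ δ * LA a := by
            rw [← ha]
            exact hkey p hp a
          have h2 : s * |p.1.1 (π₁ a) - p.2.1 c| ≤ LA a := by
            rw [hsdef]
            have h3 : 0 ≤ |p.1.1 (π₁ a) - p.2.1 c| := abs_nonneg _
            have h4 : δ⁻¹ * δ = 1 := inv_mul_cancel₀ hδ.ne'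
            nlinarith [apply_nonneg LA a]
          exact le_trans h2 hLAa.le
      exact le_trans (csInf_le hbdd ⟨(π₁ a, c), rfl, rfl⟩) hLbound

end OrderUnitSpace
set_option maxHeartbeats 2000000 in
theorem distq_quotients_le_hausdorff' (A : OrderUnitSpace)
    (LA : Seminorm ℝ A.carrier) (hLA : A.IsLipNorm LA)
    (K₁ K₂ : Set A.State)
    (B₁ B₂ : OrderUnitSpace)
    (L₁ : Seminorm ℝ B₁.carrier) (L₂ : Seminorm ℝ B₂.carrier)
    (π₁ : A.carrier →ₗ[ℝ] B₁.carrier) (π₂ : A.carrier →ₗ[ℝ] B₂.carrier)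
    (hπ₁ : A.IsMorphism B₁ π₁) (hπ₂ : A.IsMorphism B₂ π₂)
    (hs₁ : Function.Surjective π₁) (hs₂ : Function.Surjective π₂)
    (hq₁ : Induces π₁ (fun a => LA a) (fun b => L₁ b))
    (hq₂ : Induces π₂ (fun a => LA a) (fun b => L₂ b))
    (hr₁ : Set.range (A.pullState B₁ π₁ hπ₁) = K₁)
    (hr₂ : Set.range (A.pullState B₂ π₂ hπ₂) = K₂)
    (hL₁ : B₁.IsLipNorm L₁) (hL₂ : B₂.IsLipNorm L₂) :
    B₁.distq B₂ L₁ L₂ ≤ hausdorffDistWith (A.rho LA) K₁ K₂ := by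
  classical
  by_cases hK₁ : K₁ = ∅
  · by_cases hK₂ : K₂ = ∅
    · -- both state spaces are empty; the spaces are trivial
      have hE₁ : IsEmpty B₁.State :=
        ⟨fun f => Set.eq_empty_iff_forall_notMem.mp hK₁ _ (hr₁ ▸ Set.mem_range_self f)⟩
      have hE₂ : IsEmpty B₂.State :=
        ⟨fun g => Set.eq_empty_iff_forall_notMem.mp hK₂ _ (hr₂ ▸ Set.mem_range_self g)⟩
      have htriv₁ := B₁.all_zero_of_isEmpty_state hE₁
      have htriv₂ := B₂.all_zero_of_isEmpty_state hE₂
      have hEP : IsEmpty (B₁.prod B₂).State := by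
        refine ⟨fun σ => ?_⟩
        have hPe : ((B₁.prod B₂).e) = 0 := Prod.ext (htriv₁ _) (htriv₂ _)
        have h1 := σ.2.1
        rw [hPe, map_zero] at h1
        exact one_ne_zero h1.symm
      set L₀ : Seminorm ℝ (B₁.carrier × B₂.carrier) := 0 with hL₀def
      have hadm : L₀ ∈ B₁.admissible B₂ L₁ L₂ := by
        refine ⟨⟨?_, ?_⟩, ?_, ?_⟩
        · intro x
          constructor
          · intro _
            refine ⟨0, ?_⟩
            rw [zero_smul]
            exact Prod.ext (htriv₁ _) (htriv₂ _)
          · intro _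
            rfl
        · -- any two topologies on an empty type agree
          refine TopologicalSpace.ext (funext fun u => ?_)
          have hu : u = ∅ := Set.eq_empty_of_isEmpty u
          subst hu
          exact propext (iff_of_true (@isOpen_empty _ (ballTopology ((B₁.prod B₂).rho L₀)))
            (@isOpen_empty _ _))
        · intro b
          have hb : b = 0 := htriv₁ b
          subst hb
          show L₁ 0 = sInf {r : ℝ | ∃ p : B₁.carrier × B₂.carrier, p.1 = 0 ∧ L₀ p = r}
          have hset : {r : ℝ | ∃ p : B₁.carrier × B₂.carrier, p.1 = 0 ∧ L₀ p = r} = {0} := by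
            ext r
            constructor
            · rintro ⟨p, _, rfl⟩
              rfl
            · rintro rfl
              exact ⟨0, rfl, rfl⟩
          rw [hset, csInf_singleton, map_zero]
        · intro c
          have hc : c = 0 := htriv₂ c
          subst hc
          show L₂ 0 = sInf {r : ℝ | ∃ p : B₁.carrier × B₂.carrier, p.2 = 0 ∧ L₀ p = r}
          have hset : {r : ℝ | ∃ p : B₁.carrier × B₂.carrier, p.2 = 0 ∧ L₀ p = r} = {0} := by
            ext r
            constructor
            · rintro ⟨p, _, rfl⟩
              rfl
            · rintro rfl
              exact ⟨0, rfl, rfl⟩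
          rw [hset, csInf_singleton, map_zero]
      have hzero : hausdorffDistWith ((B₁.prod B₂).rho L₀)
          (Set.range (B₁.leftState B₂)) (Set.range (B₁.rightState B₂)) = 0 := by
        have h1 : Set.range (B₁.leftState B₂) = ∅ := Set.range_eq_empty _
        have h2 : Set.range (B₁.rightState B₂) = ∅ := Set.range_eq_empty _
        rw [hausdorffDistWith, h1, h2]
        simp
      calc B₁.distq B₂ L₁ L₂ ≤ hausdorffDistWith ((B₁.prod B₂).rho L₀)
            (Set.range (B₁.leftState B₂)) (Set.range (B₁.rightState B₂)) :=
          iInf₂_le L₀ hadm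
        _ = 0 := hzero
        _ ≤ _ := zero_le
    · -- K₁ empty, K₂ nonempty : the Hausdorff distance is infinite
      obtain ⟨ν, hν⟩ := Set.nonempty_iff_ne_empty.2 hK₂
      have h3 : (⨅ t ∈ K₁, A.rho LA t ν) = ⊤ := by simp [hK₁]
      have h2 : (⨆ u ∈ K₂, ⨅ t ∈ K₁, A.rho LA t u) = ⊤ := by
        refine top_unique ?_
        calc (⊤:ℝ≥0∞) = ⨅ t ∈ K₁, A.rho LA t ν := h3.symm
          _ ≤ ⨆ u ∈ K₂, ⨅ t ∈ K₁, A.rho LA t u := le_biSup (fun u => ⨅ t ∈ K₁, A.rho LA t u) hν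
      have h4 : hausdorffDistWith (A.rho LA) K₁ K₂ = ⊤ := by
        rw [hausdorffDistWith, h2]
        exact max_eq_right le_top
      rw [h4]
      exact le_top
  · by_cases hK₂ : K₂ = ∅
    · -- K₂ empty, K₁ nonempty
      obtain ⟨μ, hμ⟩ := Set.nonempty_iff_ne_empty.2 hK₁
      have h3 : (⨅ u ∈ K₂, A.rho LA μ u) = ⊤ := by simp [hK₂]
      have h2 : (⨆ t ∈ K₁, ⨅ u ∈ K₂, A.rho LA t u) = ⊤ := by
        refine top_unique ?_
        calc (⊤:ℝ≥0∞) = ⨅ u ∈ K₂, A.rho LA μ u := h3.symm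
          _ ≤ ⨆ t ∈ K₁, ⨅ u ∈ K₂, A.rho LA t u := le_biSup (fun t => ⨅ u ∈ K₂, A.rho LA t u) hμ
      have h4 : hausdorffDistWith (A.rho LA) K₁ K₂ = ⊤ := by
        rw [hausdorffDistWith, h2]
        exact max_eq_left le_top
      rw [h4]
      exact le_top
    · -- main case : both nonempty
      set RHS := hausdorffDistWith (A.rho LA) K₁ K₂ with hRHSdef
      refine ENNReal.le_of_forall_pos_le_add ?_
      intro ε hε hlt
      set δ : ℝ := RHS.toReal + ε with hδdef
      have hδ : 0 < δ := by
        have h0 : (0:ℝ) < (ε:ℝ) := hε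
        have h1 : 0 ≤ RHS.toReal := ENNReal.toReal_nonneg
        linarith
      have hofδ : ENNReal.ofReal δ = RHS + (ε : ℝ≥0∞) := by
        rw [hδdef, ENNReal.ofReal_add ENNReal.toReal_nonneg ε.coe_nonneg,
          ENNReal.ofReal_toReal hlt.ne, ENNReal.ofReal_coe_nnreal]
      have hRδ : RHS < ENNReal.ofReal δ := by
        rw [hofδ]
        exact ENNReal.lt_add_right hlt.ne (by exact_mod_cast hε.ne')
      -- the compatible set of pairs of states
      set R : Set (B₁.State × B₂.State) :=
        {p | A.rho LA ((A.pullState B₁ π₁ hπ₁) p.1) ((A.pullState B₂ π₂ hπ₂) p.2) ≤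
          ENNReal.ofReal δ} with hRdef
      have hR : ∀ p ∈ R, A.rho LA ((A.pullState B₁ π₁ hπ₁) p.1) ((A.pullState B₂ π₂ hπ₂) p.2) ≤
          ENNReal.ofReal δ := fun p hp => hp
      have hcomp1 : (⨆ t ∈ K₁, ⨅ u ∈ K₂, A.rho LA t u) < ENNReal.ofReal δ :=
        lt_of_le_of_lt (le_max_left _ _) hRδ
      have hcomp2 : (⨆ u ∈ K₂, ⨅ t ∈ K₁, A.rho LA t u) < ENNReal.ofReal δ :=
        lt_of_le_of_lt (le_max_right _ _) hRδ
      -- for any state of B₁ there is a δ-close state of B₂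
      have hpair1 : ∀ f : B₁.State, ∃ g : B₂.State, (f, g) ∈ R := by
        intro f
        have hmem : (A.pullState B₁ π₁ hπ₁) f ∈ K₁ := hr₁ ▸ Set.mem_range_self f
        have h5 : (⨅ u ∈ K₂, A.rho LA ((A.pullState B₁ π₁ hπ₁) f) u) < ENNReal.ofReal δ :=
          lt_of_le_of_lt (le_biSup (fun t => ⨅ u ∈ K₂, A.rho LA t u) hmem) hcomp1
        rw [iInf_lt_iff] at h5
        obtain ⟨ν, hν⟩ := h5
        rw [iInf_lt_iff] at hν
        obtain ⟨hνK, hνlt⟩ := hν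
        obtain ⟨g, rfl⟩ : ∃ g, (A.pullState B₂ π₂ hπ₂) g = ν := by
          have := hr₂ ▸ hνK
          exact this
        exact ⟨g, hνlt.le⟩
      have hpair2 : ∀ g : B₂.State, ∃ f : B₁.State, (f, g) ∈ R := by
        intro g
        have hmem : (A.pullState B₂ π₂ hπ₂) g ∈ K₂ := hr₂ ▸ Set.mem_range_self g
        have h5 : (⨅ t ∈ K₁, A.rho LA t ((A.pullState B₂ π₂ hπ₂) g)) < ENNReal.ofReal δ :=
          lt_of_le_of_lt (le_biSup (fun u => ⨅ t ∈ K₁, A.rho LA t u) hmem) hcomp2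
        rw [iInf_lt_iff] at h5
        obtain ⟨μ, hμ'⟩ := h5
        rw [iInf_lt_iff] at hμ'
        obtain ⟨hμK, hμlt⟩ := hμ'
        obtain ⟨f, rfl⟩ : ∃ f, (A.pullState B₁ π₁ hπ₁) f = μ := by
          have := hr₁ ▸ hμK
          exact this
        exact ⟨f, hμlt.le⟩
      -- a reference pair
      have hf₀ : ∃ f : B₁.State, True := by
        obtain ⟨μ, hμ⟩ := Set.nonempty_iff_ne_empty.2 hK₁
        obtain ⟨f, _⟩ : ∃ f, (A.pullState B₁ π₁ hπ₁) f = μ := by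
          have := hr₁ ▸ hμ
          exact this
        exact ⟨f, trivial⟩
      obtain ⟨fR, -⟩ := hf₀
      obtain ⟨gR, hfgR⟩ := hpair1 fR
      -- diameter bounds
      obtain ⟨D₁, hD₁0, hD₁r⟩ := B₁.exists_rho_bound hL₁
      obtain ⟨D₂, hD₂0, hD₂r⟩ := B₂.exists_rho_bound hL₂
      have hD₁ : ∀ (h h' : B₁.State) (b : B₁.carrier), L₁ b ≤ 1 → |h.1 b - h'.1 b| ≤ D₁ :=
        fun h h' b hb => B₁.abs_le_of_rho_le_one hL₁.1 hD₁0 (hD₁r h h') hb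
      have hD₂ : ∀ (h h' : B₂.State) (c : B₂.carrier), L₂ c ≤ 1 → |h.1 c - h'.1 c| ≤ D₂ :=
        fun h h' c hc => B₂.abs_le_of_rho_le_one hL₂.1 hD₂0 (hD₂r h h') hc
      set L : Seminorm ℝ (B₁.carrier × B₂.carrier) :=
        OrderUnitSpace.bridgeL B₁ B₂ R δ⁻¹ L₁ L₂ (inv_nonneg.2 hδ.le) with hLdef
      have hadm : L ∈ B₁.admissible B₂ L₁ L₂ := by
        obtain ⟨hind1, hind2⟩ := OrderUnitSpace.bridgeL_induces A B₁ B₂ LA hLA L₁ L₂ π₁ π₂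
          hπ₁ hπ₂ hs₁ hs₂ hq₁ hq₂ hδ R hR
        exact ⟨OrderUnitSpace.bridgeL_isLipNorm B₁ B₂ hL₁ hL₂ hδ R hfgR D₁ D₂ hD₁0 hD₂0 hD₁ hD₂,
          hind1, hind2⟩
      -- the Hausdorff bound for the bridge Lip-norm
      have hrhoLR : ∀ (f : B₁.State) (g : B₂.State), (f, g) ∈ R →
          (B₁.prod B₂).rho L (B₁.leftState B₂ f) (B₁.rightState B₂ g) ≤ ENNReal.ofReal δ := by
        intro f g hfg
        refine iSup_le ?_
        rintro ⟨x, hx⟩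
        have hN : OrderUnitSpace.bridgeFun B₁ B₂ R δ⁻¹ x ≤ 1 :=
          le_trans (OrderUnitSpace.bridgeFun_le_bridgeL B₁ B₂ R δ⁻¹ L₁ L₂ _ x) hx
        have h6 : δ⁻¹ * |f.1 x.1 - g.1 x.2| ≤ 1 :=
          le_trans (OrderUnitSpace.le_bridgeFun B₁ B₂ R δ⁻¹ (inv_nonneg.2 hδ.le) hfg x) hN
        have h7 : |f.1 x.1 - g.1 x.2| ≤ δ := by
          have h8 : δ⁻¹ * δ = 1 := inv_mul_cancel₀ hδ.ne'
          nlinarith [abs_nonneg (f.1 x.1 - g.1 x.2)]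
        show ENNReal.ofReal |(B₁.leftState B₂ f).1 x - (B₁.rightState B₂ g).1 x| ≤
          ENNReal.ofReal δ
        have h9 : (B₁.leftState B₂ f).1 x = f.1 x.1 := rfl
        have h10 : (B₁.rightState B₂ g).1 x = g.1 x.2 := rfl
        rw [h9, h10]
        exact ENNReal.ofReal_le_ofReal h7
      have hH : hausdorffDistWith ((B₁.prod B₂).rho L)
          (Set.range (B₁.leftState B₂)) (Set.range (B₁.rightState B₂)) ≤ ENNReal.ofReal δ := by
        rw [hausdorffDistWith]
        refine max_le ?_ ?_
        · refine iSup₂_le ?_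
          rintro u ⟨f, rfl⟩
          obtain ⟨g, hg⟩ := hpair1 f
          refine le_trans (iInf₂_le (B₁.rightState B₂ g) (Set.mem_range_self g)) ?_
          exact hrhoLR f g hg
        · refine iSup₂_le ?_
          rintro u ⟨g, rfl⟩
          obtain ⟨f, hf⟩ := hpair2 g
          refine le_trans (iInf₂_le (B₁.leftState B₂ f) (Set.mem_range_self f)) ?_
          exact hrhoLR f g hf
      calc B₁.distq B₂ L₁ L₂ ≤ hausdorffDistWith ((B₁.prod B₂).rho L)
            (Set.range (B₁.leftState B₂)) (Set.range (B₁.rightState B₂)) := iInf₂_le L hadm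
        _ ≤ ENNReal.ofReal δ := hH
        _ = RHS + (ε : ℝ≥0∞) := hofδ

/-- **Proposition 5.7 of Rieffel.** Let `(A, L_A)` be a compact quantum metric space
and let `K₁`, `K₂` be compact convex subsets of `S(A)`, with associated quotient
compact quantum metric spaces `(B₁, L₁)` and `(B₂, L₂)` (here realized as surjective
morphisms `π₁, π₂` carrying `L_A` to the quotient seminorms `L₁, L₂`, and whose dual
state embeddings have ranges exactly `K₁` and `K₂`). Then
`dist_q(B₁, B₂) ≤ dist_H^{ρ_{L_A}}(K₁, K₂)`. -/
theorem distq_quotients_le_hausdorff (A : OrderUnitSpace)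
    (LA : Seminorm ℝ A.carrier) (hLA : A.IsLipNorm LA)
    (K₁ K₂ : Set A.State) (hK₁c : IsCompact K₁) (hK₂c : IsCompact K₂)
    (hK₁v : StateConvex A K₁) (hK₂v : StateConvex A K₂)
    (B₁ B₂ : OrderUnitSpace)
    (L₁ : Seminorm ℝ B₁.carrier) (L₂ : Seminorm ℝ B₂.carrier)
    (π₁ : A.carrier →ₗ[ℝ] B₁.carrier) (π₂ : A.carrier →ₗ[ℝ] B₂.carrier)
    (hπ₁ : A.IsMorphism B₁ π₁) (hπ₂ : A.IsMorphism B₂ π₂)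
    (hs₁ : Function.Surjective π₁) (hs₂ : Function.Surjective π₂)
    (hq₁ : Induces π₁ (fun a => LA a) (fun b => L₁ b))
    (hq₂ : Induces π₂ (fun a => LA a) (fun b => L₂ b))
    (hr₁ : Set.range (A.pullState B₁ π₁ hπ₁) = K₁)
    (hr₂ : Set.range (A.pullState B₂ π₂ hπ₂) = K₂)
    (hL₁ : B₁.IsLipNorm L₁) (hL₂ : B₂.IsLipNorm L₂) :
    B₁.distq B₂ L₁ L₂ ≤ hausdorffDistWith (A.rho LA) K₁ K₂ := by
  exact distq_quotients_le_hausdorff' A LA hLA K₁ K₂ B₁ B₂ L₁ L₂ π₁ π₂ hπ₁ hπ₂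
    hs₁ hs₂ hq₁ hq₂ hr₁ hr₂ hL₁ hL₂
end

section
/- The diameter function is Lipschitz for quantum Gromov–Hausdorff distance: for all compact quantum metric spaces (A,L_A) and (B,L_B), |diam(A,L_A) − diam(B,L_B)| ≤ 2·dist_q(A,B). -/
open scoped ENNReal

section QGHAux

open Filter Topology

/-- Approximation lemma in `ℝ≥0∞`. -/
lemma ofReal_le_of_forall_lt_one (x : ℝ) (y : ℝ≥0∞)
    (h : ∀ r : ℝ, 0 < r → r < 1 → ENNReal.ofReal (r * x) ≤ y) :
    ENNReal.ofReal x ≤ y := by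
  have ht : Tendsto (fun r : ℝ => ENNReal.ofReal (r * x)) (𝓝[<] (1:ℝ))
      (𝓝 (ENNReal.ofReal x)) := by
    have h1 : Tendsto (fun r : ℝ => r * x) (𝓝 (1:ℝ)) (𝓝 x) := by
      have := (continuous_id.mul (continuous_const (y := x))).tendsto (1:ℝ)
      simpa [Pi.mul_def] using this
    exact (ENNReal.continuous_ofReal.tendsto x).comp (h1.mono_left nhdsWithin_le_nhds)
  refine le_of_tendsto ht ?_
  filter_upwards [self_mem_nhdsWithin,
    eventually_nhdsWithin_of_eventually_nhds (eventually_gt_nhds (by norm_num : (0:ℝ) < 1))]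
    with r h1 h0
  exact h r h0 h1

/-- `rho` is symmetric. -/
lemma rho_symm (A : OrderUnitSpace) (L : Seminorm ℝ A.carrier) (μ ν : A.State) :
    A.rho L μ ν = A.rho L ν μ := by
  unfold OrderUnitSpace.rho
  congr 1
  ext a
  rw [abs_sub_comm]

/-- `rho` satisfies the triangle inequality. -/
lemma rho_triangle (A : OrderUnitSpace) (L : Seminorm ℝ A.carrier) (μ κ ν : A.State) :
    A.rho L μ ν ≤ A.rho L μ κ + A.rho L κ ν := by
  unfold OrderUnitSpace.rho
  refine iSup_le fun a => ?_
  calc ENNReal.ofReal |μ.1 a.1 - ν.1 a.1|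
      ≤ ENNReal.ofReal (|μ.1 a.1 - κ.1 a.1| + |κ.1 a.1 - ν.1 a.1|) :=
        ENNReal.ofReal_le_ofReal (abs_sub_le _ _ _)
    _ = ENNReal.ofReal |μ.1 a.1 - κ.1 a.1| + ENNReal.ofReal |κ.1 a.1 - ν.1 a.1| :=
        ENNReal.ofReal_add (abs_nonneg _) (abs_nonneg _)
    _ ≤ _ := add_le_add
        (le_iSup (fun b : {b : A.carrier // L b ≤ 1} => ENNReal.ofReal |μ.1 b.1 - κ.1 b.1|) a)
        (le_iSup (fun b : {b : A.carrier // L b ≤ 1} => ENNReal.ofReal |κ.1 b.1 - ν.1 b.1|) a)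

/-- Purely metric lemma: diameter comparison via Hausdorff distance. -/
lemma diam_le_diam_add_hausdorff {S : Type*} (ρ : S → S → ℝ≥0∞)
    (hsymm : ∀ x y, ρ x y = ρ y x) (htri : ∀ x y z, ρ x z ≤ ρ x y + ρ y z)
    (T U : Set S) :
    (⨆ t ∈ T, ⨆ t' ∈ T, ρ t t') ≤
      (⨆ u ∈ U, ⨆ u' ∈ U, ρ u u') + 2 * hausdorffDistWith ρ T U := by
  set H := hausdorffDistWith ρ T U with hH
  set D := ⨆ u ∈ U, ⨆ u' ∈ U, ρ u u' with hD
  refine iSup₂_le fun t ht => iSup₂_le fun t' ht' => ?_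
  have h1 : ⨅ u ∈ U, ρ t u ≤ H :=
    le_trans (le_iSup₂_of_le t ht le_rfl) (le_max_left _ _)
  have h2 : ⨅ u ∈ U, ρ t' u ≤ H :=
    le_trans (le_iSup₂_of_le t' ht' le_rfl) (le_max_left _ _)
  have key : ρ t t' ≤ (⨅ u ∈ U, ρ t u) + (D + ⨅ u' ∈ U, ρ t' u') := by
    rw [iInf_subtype', iInf_subtype', ENNReal.add_iInf (f := fun u' : U => ρ t' u'.1),
      ENNReal.iInf_add]
    refine le_iInf fun u => ?_
    rw [ENNReal.add_iInf]
    refine le_iInf fun u' => ?_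
    calc ρ t t' ≤ ρ t u.1 + ρ u.1 t' := htri _ _ _
      _ ≤ ρ t u.1 + (ρ u.1 u'.1 + ρ u'.1 t') := add_le_add_right (htri _ _ _) _
      _ ≤ ρ t u.1 + (D + ρ t' u'.1) := by
          refine add_le_add_right (add_le_add ?_ (le_of_eq (hsymm _ _))) _
          exact le_iSup₂_of_le u.1 u.2 (le_iSup₂_of_le u'.1 u'.2 le_rfl)
  calc ρ t t' ≤ (⨅ u ∈ U, ρ t u) + (D + ⨅ u' ∈ U, ρ t' u') := key
    _ ≤ H + (D + H) := add_le_add h1 (add_le_add_right h2 _)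
    _ = D + 2 * H := by ring

section Compare

variable {A B : OrderUnitSpace} {LA : Seminorm ℝ A.carrier} {LB : Seminorm ℝ B.carrier}
  {L : Seminorm ℝ (A.prod B).carrier}

/-- The induced-seminorm set for the first coordinate is nonempty and bounded below. -/
lemma fst_set_props (a : A.carrier) :
    {r : ℝ | ∃ p : (A.prod B).carrier, p.1 = a ∧ L p = r}.Nonempty ∧
      BddBelow {r : ℝ | ∃ p : (A.prod B).carrier, p.1 = a ∧ L p = r} :=
  ⟨⟨L (a, 0), (a, 0), rfl, rfl⟩,
    ⟨0, by rintro s ⟨p, -, rfl⟩; exact apply_nonneg L p⟩⟩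

lemma snd_set_props (b : B.carrier) :
    {r : ℝ | ∃ p : (A.prod B).carrier, p.2 = b ∧ L p = r}.Nonempty ∧
      BddBelow {r : ℝ | ∃ p : (A.prod B).carrier, p.2 = b ∧ L p = r} :=
  ⟨⟨L (0, b), (0, b), rfl, rfl⟩,
    ⟨0, by rintro s ⟨p, -, rfl⟩; exact apply_nonneg L p⟩⟩

/-- Lower bound: `ρ_{L_A}` is dominated by `ρ_L` on the embedded copy of `S(A)`. -/
lemma rho_left_ge
    (hIA : Induces (Prod.fst : A.carrier × B.carrier → A.carrier)
      (fun p => L p) (fun a => LA a))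
    (μ ν : A.State) :
    A.rho LA μ ν ≤ (A.prod B).rho L (A.leftState B μ) (A.leftState B ν) := by
  refine iSup_le fun a => ?_
  refine ofReal_le_of_forall_lt_one _ _ fun r hr0 hr1 => ?_
  obtain ⟨hne, hbd⟩ := fst_set_props (L := L) (B := B) a.1
  have heq : LA a.1 = sInf {s : ℝ | ∃ p : (A.prod B).carrier, p.1 = a.1 ∧ L p = s} := hIA a.1
  have hlt : sInf {s : ℝ | ∃ p : (A.prod B).carrier, p.1 = a.1 ∧ L p = s} < r⁻¹ := by
    refine lt_of_le_of_lt ?_ (one_lt_inv₀ hr0 |>.mpr hr1)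
    rw [← heq]
    exact a.2
  obtain ⟨s, ⟨p, hp1, hps⟩, hs⟩ := (csInf_lt_iff hbd hne).mp hlt
  have hLp : L (r • p) ≤ 1 := by
    rw [map_smul_eq_mul, Real.norm_eq_abs, abs_of_pos hr0]
    have hsr : L p < r⁻¹ := hps ▸ hs
    calc r * L p ≤ r * r⁻¹ := by nlinarith
      _ = 1 := mul_inv_cancel₀ hr0.ne'
  have hval : ∀ κ : A.State, ((A.leftState B κ).1 : (A.prod B).carrier → ℝ) (r • p)
      = r * κ.1 a.1 := by
    intro κ
    show κ.1 ((r • p).1) = r * κ.1 a.1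
    rw [Prod.smul_fst, hp1, map_smul, smul_eq_mul]
  calc ENNReal.ofReal (r * |μ.1 a.1 - ν.1 a.1|)
      = ENNReal.ofReal |(A.leftState B μ).1 (r • p) - (A.leftState B ν).1 (r • p)| := by
        rw [hval μ, hval ν, ← mul_sub, abs_mul, abs_of_pos hr0]
    _ ≤ _ := le_iSup (fun q : {q : (A.prod B).carrier // L q ≤ 1} =>
        ENNReal.ofReal |(A.leftState B μ).1 q.1 - (A.leftState B ν).1 q.1|) ⟨r • p, hLp⟩

/-- Lower bound: `ρ_{L_B}` is dominated by `ρ_L` on the embedded copy of `S(B)`. -/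
lemma rho_right_ge
    (hIB : Induces (Prod.snd : A.carrier × B.carrier → B.carrier)
      (fun p => L p) (fun b => LB b))
    (μ ν : B.State) :
    B.rho LB μ ν ≤ (A.prod B).rho L (A.rightState B μ) (A.rightState B ν) := by
  refine iSup_le fun a => ?_
  refine ofReal_le_of_forall_lt_one _ _ fun r hr0 hr1 => ?_
  obtain ⟨hne, hbd⟩ := snd_set_props (L := L) (A := A) a.1
  have heq : LB a.1 = sInf {s : ℝ | ∃ p : (A.prod B).carrier, p.2 = a.1 ∧ L p = s} := hIB a.1
  have hlt : sInf {s : ℝ | ∃ p : (A.prod B).carrier, p.2 = a.1 ∧ L p = s} < r⁻¹ := by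
    refine lt_of_le_of_lt ?_ (one_lt_inv₀ hr0 |>.mpr hr1)
    rw [← heq]
    exact a.2
  obtain ⟨s, ⟨p, hp1, hps⟩, hs⟩ := (csInf_lt_iff hbd hne).mp hlt
  have hLp : L (r • p) ≤ 1 := by
    rw [map_smul_eq_mul, Real.norm_eq_abs, abs_of_pos hr0]
    have hsr : L p < r⁻¹ := hps ▸ hs
    calc r * L p ≤ r * r⁻¹ := by nlinarith
      _ = 1 := mul_inv_cancel₀ hr0.ne'
  have hval : ∀ κ : B.State, ((A.rightState B κ).1 : (A.prod B).carrier → ℝ) (r • p)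
      = r * κ.1 a.1 := by
    intro κ
    show κ.1 ((r • p).2) = r * κ.1 a.1
    rw [Prod.smul_snd, hp1, map_smul, smul_eq_mul]
  calc ENNReal.ofReal (r * |μ.1 a.1 - ν.1 a.1|)
      = ENNReal.ofReal |(A.rightState B μ).1 (r • p) - (A.rightState B ν).1 (r • p)| := by
        rw [hval μ, hval ν, ← mul_sub, abs_mul, abs_of_pos hr0]
    _ ≤ _ := le_iSup (fun q : {q : (A.prod B).carrier // L q ≤ 1} =>
        ENNReal.ofReal |(A.rightState B μ).1 q.1 - (A.rightState B ν).1 q.1|) ⟨r • p, hLp⟩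

/-- Upper bound: `ρ_L` on the embedded copy of `S(A)` is dominated by `ρ_{L_A}`. -/
lemma rho_left_le
    (hIA : Induces (Prod.fst : A.carrier × B.carrier → A.carrier)
      (fun p => L p) (fun a => LA a))
    (μ ν : A.State) :
    (A.prod B).rho L (A.leftState B μ) (A.leftState B ν) ≤ A.rho LA μ ν := by
  refine iSup_le fun p => ?_
  obtain ⟨hne, hbd⟩ := fst_set_props (L := L) (B := B) p.1.1
  have heq : LA p.1.1 = sInf {s : ℝ | ∃ q : (A.prod B).carrier, q.1 = p.1.1 ∧ L q = s} :=
    hIA p.1.1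
  have hle : LA p.1.1 ≤ 1 := by
    rw [heq]
    exact le_trans (csInf_le hbd ⟨p.1, rfl, rfl⟩) p.2
  exact le_iSup (fun a : {a : A.carrier // LA a ≤ 1} =>
    ENNReal.ofReal |μ.1 a.1 - ν.1 a.1|) ⟨p.1.1, hle⟩

/-- Upper bound: `ρ_L` on the embedded copy of `S(B)` is dominated by `ρ_{L_B}`. -/
lemma rho_right_le
    (hIB : Induces (Prod.snd : A.carrier × B.carrier → B.carrier)
      (fun p => L p) (fun b => LB b))
    (μ ν : B.State) :
    (A.prod B).rho L (A.rightState B μ) (A.rightState B ν) ≤ B.rho LB μ ν := by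
  refine iSup_le fun p => ?_
  obtain ⟨hne, hbd⟩ := snd_set_props (L := L) (A := A) p.1.2
  have heq : LB p.1.2 = sInf {s : ℝ | ∃ q : (A.prod B).carrier, q.2 = p.1.2 ∧ L q = s} :=
    hIB p.1.2
  have hle : LB p.1.2 ≤ 1 := by
    rw [heq]
    exact le_trans (csInf_le hbd ⟨p.1, rfl, rfl⟩) p.2
  exact le_iSup (fun b : {b : B.carrier // LB b ≤ 1} =>
    ENNReal.ofReal |μ.1 b.1 - ν.1 b.1|) ⟨p.1.2, hle⟩

/-- The main per-`L` estimate, first half. -/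
lemma diam_half (hL : L ∈ A.admissible B LA LB) :
    A.diam LA ≤ B.diam LB + 2 * hausdorffDistWith ((A.prod B).rho L)
      (Set.range (A.leftState B)) (Set.range (A.rightState B)) := by
  obtain ⟨-, hIA, hIB⟩ := hL
  set ρ := (A.prod B).rho L
  set T := Set.range (A.leftState B)
  set U := Set.range (A.rightState B)
  have hmain := diam_le_diam_add_hausdorff ρ (rho_symm _ L) (rho_triangle _ L) T U
  unfold OrderUnitSpace.diam
  calc (⨆ (μ : A.State) (ν : A.State), A.rho LA μ ν) ≤ ⨆ t ∈ T, ⨆ t' ∈ T, ρ t t' := by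
        refine iSup_le fun μ => iSup_le fun ν => ?_
        refine le_trans (rho_left_ge hIA μ ν) ?_
        exact le_iSup₂_of_le (A.leftState B μ) ⟨μ, rfl⟩
          (le_iSup₂_of_le (A.leftState B ν) ⟨ν, rfl⟩ le_rfl)
    _ ≤ (⨆ u ∈ U, ⨆ u' ∈ U, ρ u u') + 2 * hausdorffDistWith ρ T U := hmain
    _ ≤ (⨆ (μ : B.State) (ν : B.State), B.rho LB μ ν) + 2 * hausdorffDistWith ρ T U := by
        refine add_le_add_left ?_ _
        refine iSup₂_le fun u hu => iSup₂_le fun u' hu' => ?_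
        obtain ⟨κ, rfl⟩ := hu
        obtain ⟨κ', rfl⟩ := hu'
        refine le_trans (rho_right_le hIB κ κ') ?_
        exact le_iSup₂ (f := fun μ ν => B.rho LB μ ν) κ κ'

/-- The main per-`L` estimate, second half. -/
lemma diam_half' (hL : L ∈ A.admissible B LA LB) :
    B.diam LB ≤ A.diam LA + 2 * hausdorffDistWith ((A.prod B).rho L)
      (Set.range (A.leftState B)) (Set.range (A.rightState B)) := by
  obtain ⟨-, hIA, hIB⟩ := hL
  set ρ := (A.prod B).rho L
  set T := Set.range (A.leftState B)
  set U := Set.range (A.rightState B)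
  have hsymmH : hausdorffDistWith ρ U T = hausdorffDistWith ρ T U := by
    unfold hausdorffDistWith
    rw [max_comm]
    congr 1
    · refine le_antisymm ?_ ?_ <;>
        refine iSup₂_le fun x hx => ?_ <;>
        refine le_iSup₂_of_le x hx ?_ <;>
        exact le_iInf₂ fun y hy => le_trans (iInf₂_le y hy) (le_of_eq (rho_symm _ L _ _))
    · refine le_antisymm ?_ ?_ <;>
        refine iSup₂_le fun x hx => ?_ <;>
        refine le_iSup₂_of_le x hx ?_ <;>
        exact le_iInf₂ fun y hy => le_trans (iInf₂_le y hy) (le_of_eq (rho_symm _ L _ _))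
  have hmain := diam_le_diam_add_hausdorff ρ (rho_symm _ L) (rho_triangle _ L) U T
  unfold OrderUnitSpace.diam
  calc (⨆ (μ : B.State) (ν : B.State), B.rho LB μ ν) ≤ ⨆ t ∈ U, ⨆ t' ∈ U, ρ t t' := by
        refine iSup_le fun μ => iSup_le fun ν => ?_
        refine le_trans (rho_right_ge hIB μ ν) ?_
        exact le_iSup₂_of_le (A.rightState B μ) ⟨μ, rfl⟩
          (le_iSup₂_of_le (A.rightState B ν) ⟨ν, rfl⟩ le_rfl)
    _ ≤ (⨆ u ∈ T, ⨆ u' ∈ T, ρ u u') + 2 * hausdorffDistWith ρ U T := hmain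
    _ ≤ (⨆ (μ : A.State) (ν : A.State), A.rho LA μ ν) + 2 * hausdorffDistWith ρ T U := by
        rw [hsymmH]
        refine add_le_add_left ?_ _
        refine iSup₂_le fun u hu => iSup₂_le fun u' hu' => ?_
        obtain ⟨κ, rfl⟩ := hu
        obtain ⟨κ', rfl⟩ := hu'
        refine le_trans (rho_left_le hIA κ κ') ?_
        exact le_iSup₂ (f := fun μ ν => A.rho LA μ ν) κ κ'

end Compare

end QGHAux

/-- **The diameter is Lipschitz for quantum Gromov–Hausdorff distance:**
`|diam(A, L_A) − diam(B, L_B)| ≤ 2 · dist_q(A, B)`, stated in `ℝ≥0∞` as the pair of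
inequalities `diam(A) ≤ diam(B) + 2 dist_q(A,B)` and `diam(B) ≤ diam(A) + 2 dist_q(A,B)`. -/
theorem abs_diam_sub_diam_le_two_distq (A B : OrderUnitSpace)
    (LA : Seminorm ℝ A.carrier) (LB : Seminorm ℝ B.carrier)
    (hLA : A.IsLipNorm LA) (hLB : B.IsLipNorm LB) :
    A.diam LA ≤ B.diam LB + 2 * A.distq B LA LB ∧
      B.diam LB ≤ A.diam LA + 2 * A.distq B LA LB := by
  by_cases h : (A.admissible B LA LB).Nonempty
  · haveI := h.to_subtype
    have hd : A.distq B LA LB = ⨅ L : (A.admissible B LA LB),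
        hausdorffDistWith ((A.prod B).rho L.1) (Set.range (A.leftState B))
          (Set.range (A.rightState B)) := (iInf_subtype'' _ _).symm
    constructor
    · rw [hd, ENNReal.mul_iInf_of_ne two_ne_zero ENNReal.ofNat_ne_top, ENNReal.add_iInf]
      exact le_iInf fun L => diam_half L.2
    · rw [hd, ENNReal.mul_iInf_of_ne two_ne_zero ENNReal.ofNat_ne_top, ENNReal.add_iInf]
      exact le_iInf fun L => diam_half' L.2
  · rw [Set.not_nonempty_iff_eq_empty] at h
    have hTop : A.distq B LA LB = ⊤ := by
      rw [OrderUnitSpace.distq, h]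
      simp
    constructor
    all_goals
      rw [hTop, ENNReal.mul_top (by norm_num), add_top]
      exact le_top
end

section
/- Let X be a finite-dimensional real vector space with a linear functional η, let Θ be a compact metric space with metric d, let {‖·‖_θ}_{θ∈Θ} be a continuous field of base-norms on (X,η) with bases S_θ, and let ‖·‖_* be a norm on X such that ‖x‖_θ ≥ ‖x‖_* for all θ ∈ Θ and x ∈ X. Then the map θ ↦ S_θ is uniformly continuous for the Hausdorff distance dist_H^* induced by ‖·‖_*: for every ε > 0 there is δ > 0 such that d(θ,ψ) < δ implies dist_H^*(S_θ,S_ψ) < ε. -/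
open scoped ENNReal

/-- The base of a norm `N` relative to the linear functional `η`:
`S = {x | η x = 1 ∧ N x = 1}`. -/
def baseOf {X : Type*} [AddCommGroup X] [Module ℝ X]
    (η : X →ₗ[ℝ] ℝ) (N : Seminorm ℝ X) : Set X :=
  {x : X | η x = 1 ∧ N x = 1}

/-- A base-norm on `(X, η)`: a norm whose closed unit ball is the convex hull of
`S ∪ (−S)`, where `S` is its base. -/
def IsBaseNorm {X : Type*} [AddCommGroup X] [Module ℝ X]
    (η : X →ₗ[ℝ] ℝ) (N : Seminorm ℝ X) : Prop :=
  (∀ x : X, N x = 0 → x = 0) ∧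
    {x : X | N x ≤ 1} = convexHull ℝ (baseOf η N ∪ (fun x => -x) '' baseOf η N)

/-- Hausdorff distance between two subsets of a vector space with respect to a
norm-like function `N`. -/
noncomputable def hausdorffDistOfNorm {X : Type*} [AddCommGroup X]
    (N : X → ℝ) (S T : Set X) : ℝ≥0∞ :=
  max (⨆ s ∈ S, ⨅ t ∈ T, ENNReal.ofReal (N (s - t)))
      (⨆ t ∈ T, ⨅ s ∈ S, ENNReal.ofReal (N (s - t)))

section Aux

variable {X : Type*} [AddCommGroup X] [Module ℝ X]

/-- For a base-norm, `|η x| ≤ N x`. -/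
lemma abs_eta_le (η : X →ₗ[ℝ] ℝ) (N : Seminorm ℝ X) (h : IsBaseNorm η N) (x : X) :
    |η x| ≤ N x := by
  have hball : ∀ y : X, N y ≤ 1 → |η y| ≤ 1 := by
    intro y hy
    have hy' : y ∈ convexHull ℝ (baseOf η N ∪ (fun x => -x) '' baseOf η N) := by
      rw [← h.2]; exact hy
    have hconv : Convex ℝ (η ⁻¹' Set.Icc (-1 : ℝ) 1) :=
      (convex_Icc (-1 : ℝ) 1).linear_preimage η
    have hsub : (baseOf η N ∪ (fun x => -x) '' baseOf η N) ⊆ η ⁻¹' Set.Icc (-1 : ℝ) 1 := by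
      rintro z (hz | ⟨w, hw, rfl⟩)
      · simp only [Set.mem_preimage, Set.mem_Icc, hz.1]
        norm_num
      · simp only [Set.mem_preimage, map_neg, Set.mem_Icc, hw.1]
        norm_num
    have := convexHull_min hsub hconv hy'
    rw [Set.mem_preimage, Set.mem_Icc] at this
    exact abs_le.mpr this
  rcases eq_or_lt_of_le (apply_nonneg N x) with h0 | h0
  · have hx0 : x = 0 := h.1 x h0.symm
    simp [hx0]
  · have hN : N ((N x)⁻¹ • x) ≤ 1 := by
      rw [map_smul_eq_mul, Real.norm_eq_abs, abs_of_pos (inv_pos.mpr h0),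
        inv_mul_cancel₀ h0.ne']
    have := hball _ hN
    rw [map_smul, smul_eq_mul, abs_mul, abs_of_pos (inv_pos.mpr h0)] at this
    calc |η x| = N x * ((N x)⁻¹ * |η x|) := by field_simp
    _ ≤ N x * 1 := mul_le_mul_of_nonneg_left this h0.le
    _ = N x := mul_one _

lemma base_nonempty (η : X →ₗ[ℝ] ℝ) (N : Seminorm ℝ X) (h : IsBaseNorm η N) :
    (baseOf η N).Nonempty := by
  by_contra hemp
  rw [Set.not_nonempty_iff_eq_empty] at hemp
  have h0 : (0 : X) ∈ {x : X | N x ≤ 1} := by simp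
  rw [h.2, hemp] at h0
  simp at h0

lemma mem_base_iff (η : X →ₗ[ℝ] ℝ) (N : Seminorm ℝ X) (h : IsBaseNorm η N) (x : X) :
    x ∈ baseOf η N ↔ η x = 1 ∧ N x ≤ 1 := by
  constructor
  · rintro ⟨h1, h2⟩; exact ⟨h1, h2.le⟩
  · rintro ⟨h1, h2⟩
    refine ⟨h1, le_antisymm h2 ?_⟩
    calc (1 : ℝ) = |η x| := by rw [h1]; norm_num
    _ ≤ N x := abs_eta_le η N h x

/-- Any seminorm on `Fin n → ℝ` is bounded by a multiple of the sup norm. -/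
lemma seminorm_pi_bound {n : ℕ} (p : Seminorm ℝ (Fin n → ℝ)) (x : Fin n → ℝ) :
    p x ≤ (∑ i, p (Pi.single i 1)) * ‖x‖ := by
  have hx : x = ∑ i, x i • (Pi.single i (1 : ℝ) : Fin n → ℝ) := by
    ext j
    simp [Pi.single_apply, Finset.sum_ite_eq]
  calc p x = p (∑ i, x i • (Pi.single i (1 : ℝ) : Fin n → ℝ)) := by rw [← hx]
  _ ≤ ∑ i, p (x i • (Pi.single i (1 : ℝ) : Fin n → ℝ)) :=
      Finset.le_sum_of_subadditive p (map_zero p).le (map_add_le_add p) _ _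
  _ = ∑ i, |x i| * p (Pi.single i 1) := by
      simp [map_smul_eq_mul, Real.norm_eq_abs]
  _ ≤ ∑ i, p (Pi.single i 1) * ‖x‖ := by
      refine Finset.sum_le_sum fun i _ => ?_
      rw [mul_comm]
      exact mul_le_mul_of_nonneg_left (by simpa using norm_le_pi_norm x i) (apply_nonneg _ _)
  _ = (∑ i, p (Pi.single i 1)) * ‖x‖ := (Finset.sum_mul _ _ _).symm

/-- Approximation of a point of the hyperplane `η = 1` by a point of the base. -/
lemma exists_base_approx (η : X →ₗ[ℝ] ℝ) (N Nstar : Seminorm ℝ X) (h : IsBaseNorm η N)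
    (hle : ∀ x : X, Nstar x ≤ N x) (s : X) (hη : η s = 1) :
    ∃ u ∈ baseOf η N, Nstar (s - u) ≤ N s - 1 := by
  set a : ℝ := N s with ha
  have ha1 : (1 : ℝ) ≤ a := by
    have := abs_eta_le η N h s
    rw [hη] at this
    simpa using this
  have ha0 : (0 : ℝ) < a := by linarith
  -- the base and its negative are convex and nonempty
  have hSconv : Convex ℝ (baseOf η N) := by
    have heq : baseOf η N = η ⁻¹' {1} ∩ {x : X | N x ≤ 1} := by
      ext x
      rw [mem_base_iff η N h]
      simp [Set.mem_inter_iff]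
    rw [heq]
    refine Convex.inter ((convex_singleton (1 : ℝ)).linear_preimage η) ?_
    rw [h.2]
    exact convex_convexHull ℝ _
  have hnegconv : Convex ℝ ((fun x : X => -x) '' baseOf η N) := by
    have := hSconv.neg
    rwa [← Set.image_neg_eq_neg] at this
  have hS0 : (baseOf η N).Nonempty := base_nonempty η N h
  have hnS0 : ((fun x : X => -x) '' baseOf η N).Nonempty := hS0.image _
  -- decompose a⁻¹ • s in the convex join
  have hy : N (a⁻¹ • s) ≤ 1 := by
    rw [map_smul_eq_mul, Real.norm_eq_abs, abs_of_pos (inv_pos.mpr ha0), ← ha,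
      inv_mul_cancel₀ ha0.ne']
  have hy' : a⁻¹ • s ∈ convexHull ℝ (baseOf η N ∪ (fun x : X => -x) '' baseOf η N) := by
    rw [← h.2]; exact hy
  rw [Convex.convexHull_union hSconv hnegconv hS0 hnS0, mem_convexJoin] at hy'
  obtain ⟨u, hu, v, hv, μ, ν, hμ, hν, hμν, hseg⟩ := hy'
  obtain ⟨w, hw, rfl⟩ := hv
  refine ⟨u, hu, ?_⟩
  -- compute the coefficient relation from η
  have hηy : μ - ν = a⁻¹ := by
    have := congrArg η hseg
    rw [map_add, map_smul, map_smul, map_smul, map_neg, hu.1, hw.1, hη] at this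
    simp at this; linarith
  have hme : a * μ - a * ν = 1 := by
    have : a * (μ - ν) = a * a⁻¹ := by rw [hηy]
    rw [mul_inv_cancel₀ ha0.ne'] at this
    linarith [this]
  have hpe : a * μ + a * ν = a := by
    have : a * (μ + ν) = a * 1 := by rw [hμν]
    rw [mul_one] at this
    linarith [this]
  have hαμ : a * μ - 1 = (a - 1) / 2 := by linarith
  have hαν : a * ν = (a - 1) / 2 := by linarith
  -- express s - u
  have hs' : s = a • (μ • u + ν • (-w)) := by
    rw [hseg, smul_smul, mul_inv_cancel₀ ha0.ne', one_smul]
  have hrep : s - u = (a * μ - 1) • u + (a * ν) • (-w) := by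
    rw [hs']; module
  have hNu : Nstar u ≤ 1 := (hle u).trans hu.2.le
  have hNw : Nstar (-w) ≤ 1 := by
    rw [map_neg_eq_map]
    exact (hle w).trans hw.2.le
  calc Nstar (s - u) ≤ Nstar ((a * μ - 1) • u) + Nstar ((a * ν) • (-w)) := by
        rw [hrep]; exact map_add_le_add _ _ _
  _ = |a * μ - 1| * Nstar u + |a * ν| * Nstar (-w) := by
        rw [map_smul_eq_mul, map_smul_eq_mul, Real.norm_eq_abs, Real.norm_eq_abs]
  _ = ((a - 1) / 2) * Nstar u + ((a - 1) / 2) * Nstar (-w) := by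
        rw [hαμ, hαν, abs_of_nonneg (by linarith : (0:ℝ) ≤ (a - 1) / 2)]
  _ ≤ ((a - 1) / 2) * 1 + ((a - 1) / 2) * 1 := by
        have h2 : (0:ℝ) ≤ (a - 1) / 2 := by linarith
        exact add_le_add (mul_le_mul_of_nonneg_left hNu h2)
          (mul_le_mul_of_nonneg_left hNw h2)
  _ = a - 1 := by ring

/-- Uniform (in `θ`) continuity of a continuous compact field of seminorms dominating a
fixed norm, on the unit ball of that norm. -/
lemma unif_key {n : ℕ} {Θ : Type*} [MetricSpace Θ] [CompactSpace Θ] [Nonempty Θ]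
    [Nontrivial (Fin n → ℝ)]
    (q : Θ → Seminorm ℝ (Fin n → ℝ)) (qs : Seminorm ℝ (Fin n → ℝ))
    (hcont : ∀ x, Continuous fun θ => q θ x)
    (hqs : ∀ x, qs x = 0 → x = 0) :
    ∀ κ : ℝ, 0 < κ → ∃ δ : ℝ, 0 < δ ∧ ∀ θ ψ : Θ, dist θ ψ < δ →
      ∀ x : Fin n → ℝ, qs x ≤ 1 → |q θ x - q ψ x| < κ := by
  intro κ hκ
  -- uniform bound on the seminorms
  obtain ⟨θB, -, hθB⟩ := isCompact_univ.exists_isMaxOn (Set.univ_nonempty)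
    ((continuous_finset_sum _ fun i _ => hcont (Pi.single i 1)).continuousOn :
      ContinuousOn (fun θ : Θ => ∑ i, q θ (Pi.single i 1)) Set.univ)
  set B : ℝ := ∑ i, q θB (Pi.single i 1) with hBdef
  have hB0 : 0 ≤ B := Finset.sum_nonneg fun i _ => apply_nonneg _ _
  have hB : ∀ (θ : Θ) (x : Fin n → ℝ), q θ x ≤ B * ‖x‖ := by
    intro θ x
    refine (seminorm_pi_bound (q θ) x).trans ?_
    exact mul_le_mul_of_nonneg_right (isMaxOn_iff.mp hθB θ (Set.mem_univ θ)) (norm_nonneg x)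
  -- joint continuity
  have hF : Continuous (fun p : Θ × (Fin n → ℝ) => q p.1 p.2) := by
    rw [Metric.continuous_iff]
    rintro ⟨θ, x⟩ ε' hε'
    obtain ⟨δ₁, hδ₁, h1⟩ := Metric.continuous_iff.mp (hcont x) θ (ε' / 2) (by linarith)
    refine ⟨min δ₁ (ε' / 2 / (B + 1)), lt_min hδ₁ (by positivity), ?_⟩
    rintro ⟨ψ, y⟩ hd
    rw [Prod.dist_eq, max_lt_iff] at hd
    have hdθ : dist ψ θ < δ₁ := hd.1.trans_le (min_le_left _ _)
    have hdx : dist y x < ε' / 2 / (B + 1) := hd.2.trans_le (min_le_right _ _)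
    have step1 : |q ψ y - q ψ x| < ε' / 2 := by
      calc |q ψ y - q ψ x| ≤ q ψ (y - x) := abs_sub_map_le_sub _ _ _
      _ ≤ B * ‖y - x‖ := hB ψ (y - x)
      _ ≤ (B + 1) * ‖y - x‖ :=
          mul_le_mul_of_nonneg_right (by linarith) (norm_nonneg _)
      _ < (B + 1) * (ε' / 2 / (B + 1)) := by
          have hyx : ‖y - x‖ = dist y x := (dist_eq_norm y x).symm
          rw [hyx]
          exact mul_lt_mul_of_pos_left hdx (by positivity)
      _ = ε' / 2 := by field_simp
    have step2 : |q ψ x - q θ x| < ε' / 2 := by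
      have := h1 ψ hdθ
      rwa [Real.dist_eq] at this
    rw [Real.dist_eq]
    calc |q ψ y - q θ x| ≤ |q ψ y - q ψ x| + |q ψ x - q θ x| := abs_sub_le _ _ _
    _ < ε' / 2 + ε' / 2 := add_lt_add step1 step2
    _ = ε' := by ring
  -- qs is continuous
  have hqs_cont : Continuous fun x : Fin n → ℝ => qs x := by
    set C : ℝ := ∑ i, qs (Pi.single i 1) with hCdef
    have hC0 : 0 ≤ C := Finset.sum_nonneg fun i _ => apply_nonneg _ _
    refine (LipschitzWith.of_dist_le_mul (K := ⟨C, hC0⟩) fun x y => ?_).continuous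
    rw [Real.dist_eq, dist_eq_norm]
    calc |qs x - qs y| ≤ qs (x - y) := abs_sub_map_le_sub _ _ _
    _ ≤ C * ‖x - y‖ := (seminorm_pi_bound qs (x - y)).trans le_rfl
  -- lower bound for qs
  obtain ⟨z, hz, hzmin⟩ := (isCompact_sphere (0 : Fin n → ℝ) 1).exists_isMinOn
    (NormedSpace.sphere_nonempty.mpr zero_le_one) hqs_cont.continuousOn
  have hz1 : ‖z‖ = 1 := mem_sphere_zero_iff_norm.mp hz
  have hzne : z ≠ 0 := by intro h; rw [h, norm_zero] at hz1; norm_num at hz1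
  set m : ℝ := qs z with hmdef
  have hm : 0 < m := by
    rcases (apply_nonneg qs z).lt_or_eq with h | h
    · exact h
    · exact absurd (hqs z h.symm) hzne
  -- the qs-ball is compact
  have hKsub : {x : Fin n → ℝ | qs x ≤ 1} ⊆ Metric.closedBall 0 m⁻¹ := by
    intro x hx
    rw [Metric.mem_closedBall, dist_zero_right]
    rcases eq_or_ne x 0 with rfl | hx0
    · simp [inv_nonneg.mpr hm.le]
    · have hxn : (0 : ℝ) < ‖x‖ := norm_pos_iff.mpr hx0
      have hsph : ‖x‖⁻¹ • x ∈ Metric.sphere (0 : Fin n → ℝ) 1 := by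
        rw [mem_sphere_zero_iff_norm, norm_smul, Real.norm_eq_abs,
          abs_of_pos (inv_pos.mpr hxn), inv_mul_cancel₀ hxn.ne']
      have := isMinOn_iff.mp hzmin _ hsph
      rw [map_smul_eq_mul, Real.norm_eq_abs, abs_of_pos (inv_pos.mpr hxn)] at this
      -- m ≤ ‖x‖⁻¹ * qs x
      have h2 : m * ‖x‖ ≤ qs x := by
        have := mul_le_mul_of_nonneg_right this hxn.le
        rwa [mul_comm (‖x‖⁻¹) (qs x), mul_assoc, inv_mul_cancel₀ hxn.ne', mul_one] at this
      have h3 : ‖x‖ * m ≤ 1 := by rw [mul_comm]; exact h2.trans hx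
      rw [← one_div]
      exact (le_div_iff₀ hm).mpr h3
  have hK : IsCompact {x : Fin n → ℝ | qs x ≤ 1} :=
    (isCompact_closedBall (0 : Fin n → ℝ) m⁻¹).of_isClosed_subset
      (isClosed_le hqs_cont continuous_const) hKsub
  have hUC := (isCompact_univ.prod hK).uniformContinuousOn_of_continuous hF.continuousOn
  rw [Metric.uniformContinuousOn_iff] at hUC
  obtain ⟨δ, hδ, hδ'⟩ := hUC κ hκ
  refine ⟨δ, hδ, fun θ ψ hd x hx => ?_⟩
  have h1 : ((θ, x) : Θ × (Fin n → ℝ)) ∈ Set.univ ×ˢ {x : Fin n → ℝ | qs x ≤ 1} :=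
    ⟨Set.mem_univ _, hx⟩
  have h2 : ((ψ, x) : Θ × (Fin n → ℝ)) ∈ Set.univ ×ˢ {x : Fin n → ℝ | qs x ≤ 1} :=
    ⟨Set.mem_univ _, hx⟩
  have hd' : dist ((θ, x) : Θ × (Fin n → ℝ)) (ψ, x) < δ := by
    rw [Prod.dist_eq, dist_self]
    exact max_lt hd hδ
  have := hδ' _ h1 _ h2 hd'
  rwa [Real.dist_eq] at this

end Aux

/-- **Theorem 10.6 of Rieffel.** Let `X` be a finite-dimensional real vector space
with a linear functional `η`, let `Θ` be a compact metric space, let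
`{‖·‖_θ}_{θ ∈ Θ}` be a continuous field of base-norms on `(X, η)` with bases `S_θ`,
and let `‖·‖_*` be a norm on `X` with `‖x‖_θ ≥ ‖x‖_*` for all `θ` and `x`. Then
`θ ↦ S_θ` is uniformly continuous for the Hausdorff distance induced by `‖·‖_*`. -/
theorem base_field_uniformly_continuous {X : Type*} [AddCommGroup X] [Module ℝ X]
    [FiniteDimensional ℝ X]
    (η : X →ₗ[ℝ] ℝ)
    {Θ : Type*} [MetricSpace Θ] [CompactSpace Θ]
    (Ns : Θ → Seminorm ℝ X) (hbase : ∀ θ : Θ, IsBaseNorm η (Ns θ))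
    (hcont : ∀ x : X, Continuous fun θ : Θ => Ns θ x)
    (Nstar : Seminorm ℝ X) (hstar : ∀ x : X, Nstar x = 0 → x = 0)
    (hle : ∀ (θ : Θ) (x : X), Nstar x ≤ Ns θ x) :
    ∀ ε : ℝ, 0 < ε → ∃ δ : ℝ, 0 < δ ∧ ∀ θ ψ : Θ, dist θ ψ < δ →
      hausdorffDistOfNorm (fun x => Nstar x) (baseOf η (Ns θ)) (baseOf η (Ns ψ)) <
        ENNReal.ofReal ε := by
  intro ε hε
  rcases isEmpty_or_nonempty Θ with hΘ | hΘ
  · exact ⟨1, one_pos, fun θ => (IsEmpty.false θ).elim⟩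
  obtain ⟨θ₀⟩ := hΘ
  haveI : Nonempty Θ := ⟨θ₀⟩
  obtain ⟨x₀, hx₀1, -⟩ := base_nonempty η (Ns θ₀) (hbase θ₀)
  have hx₀ : x₀ ≠ 0 := by
    intro h
    rw [h, map_zero] at hx₀1
    norm_num at hx₀1
  haveI : Nontrivial X := nontrivial_of_ne x₀ 0 hx₀
  set n := Module.finrank ℝ X with hn
  let e : X ≃ₗ[ℝ] (Fin n → ℝ) := (Module.finBasis ℝ X).equivFun
  haveI : Nontrivial (Fin n → ℝ) := e.symm.toEquiv.nontrivial
  set q : Θ → Seminorm ℝ (Fin n → ℝ) :=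
    fun θ => (Ns θ).comp (e.symm : (Fin n → ℝ) →ₗ[ℝ] X) with hq
  set qs : Seminorm ℝ (Fin n → ℝ) :=
    Nstar.comp (e.symm : (Fin n → ℝ) →ₗ[ℝ] X) with hqs
  have hqc : ∀ x : Fin n → ℝ, Continuous fun θ => q θ x := fun x => hcont (e.symm x)
  have hqs0 : ∀ x : Fin n → ℝ, qs x = 0 → x = 0 := by
    intro x hx
    have := hstar (e.symm x) hx
    simpa using congrArg e this
  obtain ⟨δ, hδ, hδ'⟩ := unif_key q qs hqc hqs0 (ε / 4) (by linarith)
  -- key approximation step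
  have key : ∀ θ ψ : Θ, dist θ ψ < δ → ∀ s ∈ baseOf η (Ns θ),
      ∃ t ∈ baseOf η (Ns ψ), Nstar (s - t) ≤ ε / 2 := by
    intro θ ψ hd s hs
    have hse : qs (e s) ≤ 1 := by
      show Nstar (e.symm (e s)) ≤ 1
      rw [e.symm_apply_apply]
      exact (hle θ s).trans hs.2.le
    have hq' : |Ns θ s - Ns ψ s| < ε / 4 := by
      have := hδ' θ ψ hd (e s) hse
      simpa [hq, Seminorm.comp_apply, e.symm_apply_apply] using this
    obtain ⟨u, hu, hu2⟩ := exists_base_approx η (Ns ψ) Nstar (hbase ψ) (hle ψ) s hs.1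
    refine ⟨u, hu, hu2.trans ?_⟩
    rw [hs.2] at hq'
    have := (abs_lt.mp hq').1
    linarith
  refine ⟨δ, hδ, fun θ ψ hd => ?_⟩
  have hkey1 := key θ ψ hd
  have hkey2 := key ψ θ (by rwa [dist_comm])
  have hbound : hausdorffDistOfNorm (fun x => Nstar x) (baseOf η (Ns θ)) (baseOf η (Ns ψ))
      ≤ ENNReal.ofReal (ε / 2) := by
    rw [hausdorffDistOfNorm]
    apply max_le
    · refine iSup₂_le fun s hs => ?_
      obtain ⟨t, ht, hst⟩ := hkey1 s hs
      exact le_trans (iInf₂_le t ht) (ENNReal.ofReal_le_ofReal hst)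
    · refine iSup₂_le fun t ht => ?_
      obtain ⟨s', hs', hst⟩ := hkey2 t ht
      refine le_trans (iInf₂_le s' hs') (ENNReal.ofReal_le_ofReal ?_)
      calc Nstar (s' - t) = Nstar (-(t - s')) := by rw [neg_sub]
      _ = Nstar (t - s') := map_neg_eq_map _ _
      _ ≤ ε / 2 := hst
  refine lt_of_le_of_lt hbound ?_
  rw [ENNReal.ofReal_lt_ofReal_iff hε]
  linarith
end
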